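/- arXiv:1605.09223 — 6 statements merged into one kernel-verified Lean document; each statement's English description precedes it below -/
import Mathlib

section
/- Any polynomial P in n variables over F_q of total degree at most d can be written as P(αx + βy) = Σ_{m ∈ M^{d/2}} m(x) F_m(y) + Σ_{m ∈ M^{d/2}} m(y) G_m(x), where M^{d/2} is the set of monomials of total degree at most d/2 with each variable appearing to degree at most q-1, and F_m, G_m are polynomials. -/
lemma aux_prod_ite_zero {ι M : Type*} [CommMonoidWithZero M] (s : Finset ι)
    (p : ι → Prop) [DecidablePred p] (f : ι → M) :
    (∏ i ∈ s, if p i then f i else 0) = if ∀ i ∈ s, p i then ∏ i ∈ s, f i else 0 := by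
  split_ifs with h
  · exact Finset.prod_congr rfl fun i hi => if_pos (h i hi)
  · push_neg at h
    obtain ⟨i, hi, hpi⟩ := h
    exact Finset.prod_eq_zero hi (if_neg hpi)

lemma aux_binom_fin {R : Type*} [CommRing R] {q N : ℕ} (hN : N < q) (a b : R) :
    (a + b) ^ N =
      ∑ k : Fin q, if (k : ℕ) ≤ N then a ^ (k : ℕ) * b ^ (N - (k : ℕ)) * (N.choose k : R) else 0 := by
  rw [add_pow, ← Finset.sum_range
    (fun k => if k ≤ N then a ^ k * b ^ (N - k) * (N.choose k : R) else 0)]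
  rw [← Finset.sum_subset (Finset.range_subset_range.2 hN)
    (fun k _ hk => if_neg (by have := Finset.mem_range.not.1 hk; omega))]
  · exact Finset.sum_congr rfl fun k hk => (if_pos (Nat.lt_succ_iff.1 (Finset.mem_range.1 hk))).symm

open MvPolynomial in
/-- Any polynomial `P` in `n` variables over `F_q` of total degree at most `d` (with each
variable of degree at most `q - 1`) can be written as
`P(αx + βy) = ∑_{m ∈ M^{d/2}} m(x) F_m(y) + ∑_{m ∈ M^{d/2}} m(y) G_m(x)`,
where `M^{d/2}` is the set of monomials of total degree at most `d/2` with each exponent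
at most `q - 1`. -/
theorem stmt_3 (F : Type*) [Field F] [Fintype F] [DecidableEq F] (n d : ℕ) (α β : F)
    (P : MvPolynomial (Fin n) F) (hdeg : P.totalDegree ≤ d)
    (hvar : ∀ i, P.degreeOf i ≤ Fintype.card F - 1) :
    ∃ Fm Gm : (Fin n → Fin (Fintype.card F)) → MvPolynomial (Fin n) F,
      ∀ x y : Fin n → F,
        MvPolynomial.eval (fun i => α * x i + β * y i) P =
          (∑ m ∈ Finset.univ.filter (fun m : Fin n → Fin (Fintype.card F) =>
              2 * ∑ i, (m i : ℕ) ≤ d),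
            (∏ i, x i ^ (m i : ℕ)) * MvPolynomial.eval y (Fm m)) +
          ∑ m ∈ Finset.univ.filter (fun m : Fin n → Fin (Fintype.card F) =>
              2 * ∑ i, (m i : ℕ) ≤ d),
            (∏ i, y i ^ (m i : ℕ)) * MvPolynomial.eval x (Gm m) := by
  classical
  have hq0 : 0 < Fintype.card F := Fintype.card_pos
  have hsupdeg : ∀ e ∈ P.support, (∑ i, e i) ≤ d := by
    intro e he
    have h1 : (e.sum fun _ k => k) = ∑ i, e i := Finsupp.sum_fintype _ _ fun _ => rfl
    have h2 := le_trans (MvPolynomial.le_totalDegree he) hdeg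
    omega
  have hsupvar : ∀ e ∈ P.support, ∀ i, e i < Fintype.card F := by
    intro e he i
    have h1 := le_trans (MvPolynomial.monomial_le_degreeOf i he) (hvar i)
    omega
  refine ⟨fun m => ∑ e ∈ P.support,
      if (∀ i, (m i : ℕ) ≤ e i) ∧ 2 * ∑ i, (m i : ℕ) ≤ d then
        MvPolynomial.C (P.coeff e * ∏ i, (α ^ (m i : ℕ) * β ^ (e i - (m i : ℕ)) *
          ((e i).choose (m i) : F))) *
          MvPolynomial.monomial (e - Finsupp.equivFunOnFinite.symm fun i => (m i : ℕ)) 1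
      else 0,
    fun m => ∑ e ∈ P.support,
      if (∀ i, (m i : ℕ) ≤ e i) ∧ ¬ (2 * ∑ i, (e i - (m i : ℕ)) ≤ d) then
        MvPolynomial.C (P.coeff e * ∏ i, (α ^ (e i - (m i : ℕ)) * β ^ (m i : ℕ) *
          ((e i).choose (e i - (m i : ℕ)) : F))) *
          MvPolynomial.monomial (e - Finsupp.equivFunOnFinite.symm fun i => (m i : ℕ)) 1
      else 0, ?_⟩
  intro x y
  set S : (Fin n →₀ ℕ) → (Fin n → Fin (Fintype.card F)) → F := fun e m =>
    if ∀ i, (m i : ℕ) ≤ e i then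
      P.coeff e * ((∏ i, (α ^ (m i : ℕ) * β ^ (e i - (m i : ℕ)) * ((e i).choose (m i) : F))) *
        (∏ i, x i ^ (m i : ℕ)) * (∏ i, y i ^ (e i - (m i : ℕ))))
    else 0 with hS
  set S' : (Fin n →₀ ℕ) → (Fin n → Fin (Fintype.card F)) → F := fun e m =>
    if (∀ i, (m i : ℕ) ≤ e i) ∧ ¬ (2 * ∑ i, (e i - (m i : ℕ)) ≤ d) then
      P.coeff e * ((∏ i, (α ^ (e i - (m i : ℕ)) * β ^ (m i : ℕ) *
          ((e i).choose (e i - (m i : ℕ)) : F))) *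
        (∏ i, y i ^ (m i : ℕ)) * (∏ i, x i ^ (e i - (m i : ℕ))))
    else 0 with hS'
  have hLHS : MvPolynomial.eval (fun i => α * x i + β * y i) P
      = ∑ m : Fin n → Fin (Fintype.card F), ∑ e ∈ P.support, S e m := by
    rw [MvPolynomial.eval_eq', Finset.sum_comm]
    refine Finset.sum_congr rfl fun e he => ?_
    have hexp : ∀ i : Fin n, (α * x i + β * y i) ^ e i =
        ∑ k : Fin (Fintype.card F), if (k : ℕ) ≤ e i then
          (α * x i) ^ (k : ℕ) * (β * y i) ^ (e i - (k : ℕ)) * ((e i).choose k : F) else 0 :=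
      fun i => aux_binom_fin (hsupvar e he i) _ _
    calc P.coeff e * ∏ i, (α * x i + β * y i) ^ e i
        = P.coeff e * ∑ m : Fin n → Fin (Fintype.card F), ∏ i,
            (if ((m i) : ℕ) ≤ e i then (α * x i) ^ ((m i) : ℕ) *
              (β * y i) ^ (e i - ((m i) : ℕ)) * ((e i).choose (m i) : F) else 0) := by
          rw [Finset.prod_congr rfl fun i _ => hexp i, Fintype.prod_sum]
      _ = ∑ m, S e m := by
          rw [Finset.mul_sum]
          refine Finset.sum_congr rfl fun m _ => ?_
          rw [aux_prod_ite_zero]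
          simp only [hS]
          simp only [Finset.mem_univ, true_implies]
          rw [mul_ite, mul_zero]
          refine if_congr Iff.rfl ?_ rfl
          simp only [mul_pow, Finset.prod_mul_distrib]
          ring
  rw [hLHS, ← Finset.sum_filter_add_sum_filter_not Finset.univ
    (fun m : Fin n → Fin (Fintype.card F) => 2 * ∑ i, (m i : ℕ) ≤ d)]
  congr 1
  · -- part A : small-x part
    refine Finset.sum_congr rfl fun m hm => ?_
    have hm2 : 2 * ∑ i, ((m i) : ℕ) ≤ d := (Finset.mem_filter.1 hm).2
    rw [map_sum, Finset.mul_sum]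
    refine Finset.sum_congr rfl fun e he => ?_
    rw [apply_ite (MvPolynomial.eval y)]
    simp only [hS]
    by_cases hle : ∀ i, ((m i) : ℕ) ≤ e i
    · rw [if_pos hle, if_pos ⟨hle, hm2⟩]
      simp only [map_mul, MvPolynomial.eval_C, MvPolynomial.eval_monomial, one_mul,
        Finsupp.prod_pow, Finsupp.tsub_apply, Finsupp.coe_equivFunOnFinite_symm]
      ring
    · rw [if_neg hle, if_neg (fun h => hle h.1)]
      simp
  · -- part B : small-y part
    have hGm : ∀ m : Fin n → Fin (Fintype.card F),
        (∏ i, y i ^ ((m i) : ℕ)) * MvPolynomial.eval x (∑ e ∈ P.support,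
          if (∀ i, (m i : ℕ) ≤ e i) ∧ ¬ (2 * ∑ i, (e i - (m i : ℕ)) ≤ d) then
            MvPolynomial.C (P.coeff e * ∏ i, (α ^ (e i - (m i : ℕ)) * β ^ (m i : ℕ) *
              ((e i).choose (e i - (m i : ℕ)) : F))) *
              MvPolynomial.monomial (e - Finsupp.equivFunOnFinite.symm fun i => (m i : ℕ)) 1
          else 0)
        = ∑ e ∈ P.support, S' e m := by
      intro m
      rw [map_sum, Finset.mul_sum]
      refine Finset.sum_congr rfl fun e he => ?_
      rw [apply_ite (MvPolynomial.eval x)]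
      simp only [hS']
      by_cases hc : (∀ i, ((m i) : ℕ) ≤ e i) ∧ ¬ (2 * ∑ i, (e i - ((m i) : ℕ)) ≤ d)
      · rw [if_pos hc, if_pos hc]
        simp only [map_mul, MvPolynomial.eval_C, MvPolynomial.eval_monomial, one_mul,
          Finsupp.prod_pow, Finsupp.tsub_apply, Finsupp.coe_equivFunOnFinite_symm]
        ring
      · rw [if_neg hc, if_neg hc]
        simp
    rw [Finset.sum_congr rfl fun m _ => hGm m]
    -- extend the RHS sum to univ
    have hext : ∑ m ∈ Finset.univ.filter
          (fun m : Fin n → Fin (Fintype.card F) => 2 * ∑ i, (m i : ℕ) ≤ d),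
        ∑ e ∈ P.support, S' e m
        = ∑ m : Fin n → Fin (Fintype.card F), ∑ e ∈ P.support, S' e m := by
      refine Finset.sum_subset (Finset.filter_subset _ _) ?_
      intro m _ hm
      simp only [Finset.mem_filter, Finset.mem_univ, true_and] at hm
      refine Finset.sum_eq_zero fun e he => ?_
      simp only [hS']
      refine if_neg fun hc => hm ?_
      have hle := hc.1
      have hsum : (∑ i, ((m i) : ℕ)) + ∑ i, (e i - ((m i) : ℕ)) = ∑ i, e i := by
        rw [← Finset.sum_add_distrib]
        exact Finset.sum_congr rfl fun i _ => Nat.add_sub_cancel' (hle i)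
      have := hsupdeg e he
      omega
    rw [hext, Finset.sum_comm]
    conv_rhs => rw [Finset.sum_comm]
    refine Finset.sum_congr rfl fun e he => ?_
    -- per e : reindex m ↦ e - m
    have key : ∑ m : Fin n → Fin (Fintype.card F), S' e m
        = ∑ m ∈ Finset.univ.filter (fun m : Fin n → Fin (Fintype.card F) =>
            ¬ 2 * ∑ i, (m i : ℕ) ≤ d), S e m := by
      have h1 : ∑ m : Fin n → Fin (Fintype.card F), S' e m
          = ∑ m ∈ Finset.univ.filter (fun m : Fin n → Fin (Fintype.card F) =>
              (∀ i, (m i : ℕ) ≤ e i) ∧ ¬ (2 * ∑ i, (e i - (m i : ℕ)) ≤ d)),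
            P.coeff e * ((∏ i, (α ^ (e i - (m i : ℕ)) * β ^ (m i : ℕ) *
                ((e i).choose (e i - (m i : ℕ)) : F))) *
              (∏ i, y i ^ (m i : ℕ)) * (∏ i, x i ^ (e i - (m i : ℕ)))) := by
        simp only [hS']
        rw [Finset.sum_filter]
      have h2 : ∑ m ∈ Finset.univ.filter (fun m : Fin n → Fin (Fintype.card F) =>
            ¬ 2 * ∑ i, (m i : ℕ) ≤ d), S e m
          = ∑ m ∈ Finset.univ.filter (fun m : Fin n → Fin (Fintype.card F) =>
              (∀ i, (m i : ℕ) ≤ e i) ∧ ¬ (2 * ∑ i, (m i : ℕ) ≤ d)),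
            P.coeff e * ((∏ i, (α ^ (m i : ℕ) * β ^ (e i - (m i : ℕ)) *
                ((e i).choose (m i) : F))) *
              (∏ i, x i ^ (m i : ℕ)) * (∏ i, y i ^ (e i - (m i : ℕ)))) := by
        rw [Finset.sum_filter, Finset.sum_filter]
        refine Finset.sum_congr rfl fun m _ => ?_
        simp only [hS]
        by_cases h1 : (2 * ∑ i, ((m i) : ℕ) ≤ d) <;>
          by_cases h2 : ∀ i, ((m i) : ℕ) ≤ e i <;>
          simp [h1, h2]
      rw [h1, h2]
      refine Finset.sum_nbij' (i := fun m j => (⟨e j - ((m j) : ℕ),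
          lt_of_le_of_lt (Nat.sub_le _ _) (hsupvar e he j)⟩ : Fin (Fintype.card F)))
        (j := fun m j => (⟨e j - ((m j) : ℕ),
          lt_of_le_of_lt (Nat.sub_le _ _) (hsupvar e he j)⟩ : Fin (Fintype.card F)))
        ?_ ?_ ?_ ?_ ?_
      · intro m hm
        simp only [Finset.mem_filter, Finset.mem_univ, true_and] at hm ⊢
        obtain ⟨hle, hnd⟩ := hm
        constructor
        · intro i; exact Nat.sub_le _ _
        · have : ∀ i, e i - (e i - ((m i) : ℕ)) = ((m i) : ℕ) :=
            fun i => Nat.sub_sub_self (hle i)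
          simpa [this] using hnd
      · intro m hm
        simp only [Finset.mem_filter, Finset.mem_univ, true_and] at hm ⊢
        obtain ⟨hle, hnd⟩ := hm
        have hss : ∀ i, e i - (e i - ((m i) : ℕ)) = ((m i) : ℕ) :=
          fun i => Nat.sub_sub_self (hle i)
        exact ⟨fun i => Nat.sub_le _ _, by simpa [hss] using hnd⟩
      · intro m hm
        simp only [Finset.mem_filter, Finset.mem_univ, true_and] at hm
        funext j
        exact Fin.ext (Nat.sub_sub_self (hm.1 j))
      · intro m hm
        simp only [Finset.mem_filter, Finset.mem_univ, true_and] at hm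
        funext j
        exact Fin.ext (Nat.sub_sub_self (hm.1 j))
      · intro m hm
        simp only [Finset.mem_filter, Finset.mem_univ, true_and] at hm
        obtain ⟨hle, hnd⟩ := hm
        have hss : ∀ i, e i - (e i - ((m i) : ℕ)) = ((m i) : ℕ) :=
          fun i => Nat.sub_sub_self (hle i)
        simp only [hss]
        ring
    exact key.symm
end

section
/- Let A ⊆ F_q^n, α+β+γ = 0 in F_q, and let P be a polynomial of total degree at most d (with each variable of degree at most q-1) such that P(αa + βb) = 0 for all distinct a, b ∈ A. Then the number of a ∈ A with P(−γa) ≠ 0 is at most 2·m_{d/2}, where m_{d/2} is the number of monomials of total degree at most d/2 with each variable of degree at most q-1. -/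
open MvPolynomial Finset Matrix

private lemma matrix_rank_add_le' {K : Type*} [Field K] {m : Type*} [Fintype m]
    (A B : Matrix m m K) : (A + B).rank ≤ A.rank + B.rank := by
  classical
  have h : LinearMap.range (A + B).mulVecLin ≤
      LinearMap.range A.mulVecLin ⊔ LinearMap.range B.mulVecLin := by
    rw [Matrix.mulVecLin_add]
    rintro x ⟨y, rfl⟩
    exact Submodule.mem_sup.2 ⟨A.mulVecLin y, ⟨y, rfl⟩, B.mulVecLin y, ⟨y, rfl⟩, rfl⟩
  calc (A + B).rank
      ≤ Module.finrank K ↥(LinearMap.range A.mulVecLin ⊔ LinearMap.range B.mulVecLin) :=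
        Submodule.finrank_mono h
    _ ≤ A.rank + B.rank := Submodule.finrank_add_le_finrank_add_finrank _ _

private lemma arith_contra (d X Y Z : ℕ) (h : X + Y = Z) (hZ : Z ≤ d)
    (h1 : ¬ 2 * X ≤ d) (h2 : ¬ 2 * Y ≤ d) : False := by omega

private lemma expand_lemma (F : Type*) [Field F] (n q : ℕ) (α β : F)
    (P : MvPolynomial (Fin n) F) (hμlt : ∀ μ ∈ P.support, ∀ i, μ i < q)
    (x y : Fin n → F) :
    MvPolynomial.eval (α • x + β • y) P =
      ∑ μ ∈ P.support, ∑ k ∈ Fintype.piFinset (fun _ : Fin n => Finset.range q),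
        (MvPolynomial.coeff μ P *
            ∏ i, (α ^ k i * β ^ (μ i - k i) * ((μ i).choose (k i) : F))) *
          (∏ i, x i ^ k i) * (∏ i, y i ^ (μ i - k i)) := by
  rw [MvPolynomial.eval_eq']
  refine Finset.sum_congr rfl fun μ hμ => ?_
  have hpt : ∀ i, (α • x + β • y) i ^ μ i = (α * x i + β * y i) ^ μ i := by
    intro i; simp [smul_eq_mul]
  rw [Finset.prod_congr rfl fun i _ => hpt i]
  have hfac : ∀ i, (α * x i + β * y i) ^ μ i =
      ∑ k ∈ Finset.range q,
        (α * x i) ^ k * (β * y i) ^ (μ i - k) * ((μ i).choose k : F) := by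
    intro i
    rw [add_pow]
    refine Finset.sum_subset (Finset.range_subset_range.2 (hμlt μ hμ i)) ?_
    intro k _ hk
    have : μ i < k := by simpa using hk
    simp [Nat.choose_eq_zero_of_lt this]
  rw [Finset.prod_congr rfl fun i _ => hfac i, Finset.prod_univ_sum, Finset.mul_sum]
  refine Finset.sum_congr rfl fun k _ => ?_
  have hterm : ∀ i, (α * x i) ^ k i * (β * y i) ^ (μ i - k i) * ((μ i).choose (k i) : F) =
      (α ^ k i * β ^ (μ i - k i) * ((μ i).choose (k i) : F)) *
        (x i ^ k i * y i ^ (μ i - k i)) := by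
    intro i; rw [mul_pow, mul_pow]; ring
  rw [Finset.prod_congr rfl fun i _ => hterm i, Finset.prod_mul_distrib,
    show (∏ i, (x i ^ k i * y i ^ (μ i - k i))) =
      (∏ i, x i ^ k i) * ∏ i, y i ^ (μ i - k i) from Finset.prod_mul_distrib]
  ring

/-- Croot–Lev–Pach lemma over `F_q`: if `α + β + γ = 0` and `P` is a polynomial of total
degree at most `d` (each variable of degree at most `q - 1`) with `P(αa + βb) = 0` for all
distinct `a, b ∈ A`, then the number of `a ∈ A` with `P(-γa) ≠ 0` is at most `2 * m_{d/2}`. -/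
theorem stmt_4 (F : Type*) [Field F] [Fintype F] [DecidableEq F] (n : ℕ) (hn : 0 < n)
    (d : ℕ) (hd : d ≤ (Fintype.card F - 1) * n) (α β γ : F) (hsum : α + β + γ = 0)
    (A : Finset (Fin n → F)) (P : MvPolynomial (Fin n) F)
    (hdeg : P.totalDegree ≤ d) (hvar : ∀ i, P.degreeOf i ≤ Fintype.card F - 1)
    (hvanish : ∀ a ∈ A, ∀ b ∈ A, a ≠ b → MvPolynomial.eval (α • a + β • b) P = 0) :
    (A.filter fun a => MvPolynomial.eval (-γ • a) P ≠ 0).card ≤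
      2 * (Finset.univ.filter (fun m : Fin n → Fin (Fintype.card F) =>
        2 * ∑ i, (m i : ℕ) ≤ d)).card := by
  classical
  set q := Fintype.card F with hq
  have hq0 : 0 < q := Fintype.card_pos
  have hαβ : α + β = -γ := eq_neg_of_add_eq_zero_left hsum
  -- exponent bounds for monomials of P
  have hμlt : ∀ μ ∈ P.support, ∀ i, μ i < q := by
    intro μ hμ i
    exact lt_of_le_of_lt (MvPolynomial.degreeOf_le_iff.mp (hvar i) μ hμ)
      (Nat.sub_lt hq0 one_pos)
  have hμdeg : ∀ μ ∈ P.support, ∑ i, μ i ≤ d := by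
    intro μ hμ
    have h1 : μ.sum (fun _ e => e) ≤ P.totalDegree := MvPolynomial.le_totalDegree hμ
    have h2 : μ.sum (fun _ e => e) = ∑ i, μ i := Finsupp.sum_fintype _ _ (fun _ => rfl)
    exact h2 ▸ h1.trans hdeg
  have hcardI : Fintype.card {m : Fin n → Fin q // 2 * ∑ i, (m i : ℕ) ≤ d} =
      (Finset.univ.filter (fun m : Fin n → Fin q => 2 * ∑ i, (m i : ℕ) ≤ d)).card :=
    Fintype.card_subtype _
  -- the type of "small" monomials
  let I := {m : Fin n → Fin q // 2 * ∑ i, (m i : ℕ) ≤ d}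
  have mzero : I := ⟨fun _ => ⟨0, hq0⟩, by simp⟩
  -- the coefficients of the expansion of P(αx + βy)
  let c : (Fin n →₀ ℕ) × (Fin n → ℕ) → F := fun p =>
    MvPolynomial.coeff p.1 P *
      ∏ i, (α ^ p.2 i * β ^ (p.1 i - p.2 i) * ((p.1 i).choose (p.2 i) : F))
  let K : Finset (Fin n → ℕ) := Fintype.piFinset fun _ => Finset.range q
  let T : Finset ((Fin n →₀ ℕ) × (Fin n → ℕ)) := P.support ×ˢ K
  have expand : ∀ x y : Fin n → F,
      MvPolynomial.eval (α • x + β • y) P =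
        ∑ p ∈ T, c p * (∏ i, x i ^ p.2 i) * (∏ i, y i ^ (p.1 i - p.2 i)) := by
    intro x y
    rw [expand_lemma F n q α β P hμlt x y]
    exact (Finset.sum_product P.support K (fun p => c p * (∏ i, x i ^ p.2 i) *
      (∏ i, y i ^ (p.1 i - p.2 i)))).symm
  -- the matrix
  let M : Matrix A A F := fun a b =>
    MvPolynomial.eval (α • (a : Fin n → F) + β • (b : Fin n → F)) P
  let w : A → F := fun a => MvPolynomial.eval (-γ • (a : Fin n → F)) P
  have hMdiag : M = Matrix.diagonal w := by
    ext a b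
    by_cases hab : a = b
    · subst hab
      simp only [M, Matrix.diagonal_apply_eq, w, ← add_smul, hαβ, neg_smul]
    · have hne : (a : Fin n → F) ≠ (b : Fin n → F) := fun h => hab (Subtype.ext h)
      simp only [M, Matrix.diagonal_apply_ne _ hab]
      exact hvanish a a.2 b b.2 hne
  -- vanishing of the "both halves big" terms
  have hS0 : ∀ p ∈ (T.filter fun p => ¬ (2 * ∑ i, p.2 i ≤ d)).filter
      (fun p => ¬ (2 * ∑ i, (p.1 i - p.2 i) ≤ d)), c p = 0 := by
    intro p hp
    simp only [Finset.mem_filter, T, Finset.mem_product] at hp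
    obtain ⟨⟨⟨hsupp, -⟩, hL⟩, hR⟩ := hp
    have hbad : ∃ i, p.1 i < p.2 i := by
      by_contra hno
      push_neg at hno
      have hsum2 : ∑ i, p.2 i + ∑ i, (p.1 i - p.2 i) = ∑ i, p.1 i := by
        rw [← Finset.sum_add_distrib]
        exact Finset.sum_congr rfl fun i _ => Nat.add_sub_cancel' (hno i)
      exact arith_contra d _ _ _ hsum2 (hμdeg p.1 hsupp) hL hR
    obtain ⟨i, hi⟩ := hbad
    have hch : ((p.1 i).choose (p.2 i) : F) = 0 := by
      rw [Nat.choose_eq_zero_of_lt hi]; simp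
    have : (α ^ p.2 i * β ^ (p.1 i - p.2 i) * ((p.1 i).choose (p.2 i) : F)) = 0 := by
      rw [hch, mul_zero]
    simp only [c]
    rw [Finset.prod_eq_zero (Finset.mem_univ i) this, mul_zero]
  -- the splitting into two pieces
  let SL := T.filter fun p => 2 * ∑ i, p.2 i ≤ d
  let SR := (T.filter fun p => ¬ (2 * ∑ i, p.2 i ≤ d)).filter
      fun p => 2 * ∑ i, (p.1 i - p.2 i) ≤ d
  let ML : Matrix A A F := fun a b =>
    ∑ p ∈ SL, c p * (∏ i, (a : Fin n → F) i ^ p.2 i) *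
      (∏ i, (b : Fin n → F) i ^ (p.1 i - p.2 i))
  let MR : Matrix A A F := fun a b =>
    ∑ p ∈ SR, c p * (∏ i, (a : Fin n → F) i ^ p.2 i) *
      (∏ i, (b : Fin n → F) i ^ (p.1 i - p.2 i))
  have hsplit : M = ML + MR := by
    ext a b
    simp only [M, Matrix.add_apply, ML, MR, SL, SR]
    rw [expand]
    rw [← Finset.sum_filter_add_sum_filter_not T (fun p => 2 * ∑ i, p.2 i ≤ d)]
    congr 1
    rw [← Finset.sum_filter_add_sum_filter_not
      (T.filter fun p => ¬ (2 * ∑ i, p.2 i ≤ d))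
      (fun p => 2 * ∑ i, (p.1 i - p.2 i) ≤ d)]
    have h0 : ∑ p ∈ (T.filter fun p => ¬ (2 * ∑ i, p.2 i ≤ d)).filter
        (fun p => ¬ (2 * ∑ i, (p.1 i - p.2 i) ≤ d)),
        c p * (∏ i, (a : Fin n → F) i ^ p.2 i) *
          (∏ i, (b : Fin n → F) i ^ (p.1 i - p.2 i)) = 0 :=
      Finset.sum_eq_zero fun p hp => by rw [hS0 p hp, zero_mul, zero_mul]
    rw [h0, add_zero]
  -- classification maps into I
  let ψL : (Fin n →₀ ℕ) × (Fin n → ℕ) → I := fun p =>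
    if h : (∀ i, p.2 i < q) ∧ 2 * ∑ i, p.2 i ≤ d then
      ⟨fun i => ⟨p.2 i, h.1 i⟩, by simpa using h.2⟩ else mzero
  let ψR : (Fin n →₀ ℕ) × (Fin n → ℕ) → I := fun p =>
    if h : (∀ i, p.1 i - p.2 i < q) ∧ 2 * ∑ i, (p.1 i - p.2 i) ≤ d then
      ⟨fun i => ⟨p.1 i - p.2 i, h.1 i⟩, by simpa using h.2⟩ else mzero
  have hψL : ∀ p ∈ SL, (∀ i, ((ψL p).1 i : ℕ) = p.2 i) := by
    intro p hp i
    simp only [SL, Finset.mem_filter, T, Finset.mem_product, K, Fintype.mem_piFinset,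
      Finset.mem_range] at hp
    have hcond : (∀ i, p.2 i < q) ∧ 2 * ∑ i, p.2 i ≤ d := ⟨hp.1.2, hp.2⟩
    simp only [ψL, dif_pos hcond]
  have hψR : ∀ p ∈ SR, (∀ i, ((ψR p).1 i : ℕ) = p.1 i - p.2 i) := by
    intro p hp i
    simp only [SR, Finset.mem_filter, T, Finset.mem_product] at hp
    have hcond : (∀ i, p.1 i - p.2 i < q) ∧ 2 * ∑ i, (p.1 i - p.2 i) ≤ d := by
      refine ⟨fun j => ?_, hp.2⟩
      exact lt_of_le_of_lt (Nat.sub_le _ _) (hμlt p.1 hp.1.1.1 j)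
    simp only [ψR, dif_pos hcond]
  -- ML factors through I
  let U : Matrix A I F := fun a m => ∏ i, (a : Fin n → F) i ^ ((m.1 i : ℕ))
  let WL : Matrix I A F := fun m b =>
    ∑ p ∈ SL.filter (fun p => ψL p = m), c p * ∏ i, (b : Fin n → F) i ^ (p.1 i - p.2 i)
  have hML : ML = U * WL := by
    ext a b
    rw [Matrix.mul_apply]
    simp only [ML, WL, Finset.mul_sum]
    have step : ∀ m : I, ∑ p ∈ SL.filter (fun p => ψL p = m),
        U a m * (c p * ∏ i, (b : Fin n → F) i ^ (p.1 i - p.2 i)) =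
        ∑ p ∈ SL.filter (fun p => ψL p = m),
          c p * (∏ i, (a : Fin n → F) i ^ p.2 i) *
            (∏ i, (b : Fin n → F) i ^ (p.1 i - p.2 i)) := by
      intro m
      refine Finset.sum_congr rfl fun p hp => ?_
      rw [Finset.mem_filter] at hp
      have hU : U a m = ∏ i, (a : Fin n → F) i ^ p.2 i := by
        rw [← hp.2]
        exact Finset.prod_congr rfl fun i _ => by rw [hψL p hp.1 i]
      rw [hU, mul_left_comm, ← mul_assoc]
    rw [Finset.sum_congr rfl fun m _ => step m]
    exact (Finset.sum_fiberwise_of_maps_to (fun p _ => Finset.mem_univ (ψL p)) _).symm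
  -- MR factors through I
  let V : Matrix I A F := fun m b => ∏ i, (b : Fin n → F) i ^ ((m.1 i : ℕ))
  let WR : Matrix A I F := fun a m =>
    ∑ p ∈ SR.filter (fun p => ψR p = m), c p * ∏ i, (a : Fin n → F) i ^ p.2 i
  have hMR : MR = WR * V := by
    ext a b
    rw [Matrix.mul_apply]
    simp only [MR, WR, Finset.sum_mul]
    have step : ∀ m : I, ∑ p ∈ SR.filter (fun p => ψR p = m),
        (c p * ∏ i, (a : Fin n → F) i ^ p.2 i) * V m b =
        ∑ p ∈ SR.filter (fun p => ψR p = m),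
          c p * (∏ i, (a : Fin n → F) i ^ p.2 i) *
            (∏ i, (b : Fin n → F) i ^ (p.1 i - p.2 i)) := by
      intro m
      refine Finset.sum_congr rfl fun p hp => ?_
      rw [Finset.mem_filter] at hp
      have hV : V m b = ∏ i, (b : Fin n → F) i ^ (p.1 i - p.2 i) := by
        rw [← hp.2]
        exact Finset.prod_congr rfl fun i _ => by rw [hψR p hp.1 i]
      rw [hV, mul_assoc, ← mul_assoc]
    rw [Finset.sum_congr rfl fun m _ => step m]
    exact (Finset.sum_fiberwise_of_maps_to (fun p _ => Finset.mem_univ (ψR p)) _).symm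
  -- rank bounds
  have hrankM : M.rank ≤ 2 * Fintype.card I := by
    rw [hsplit]
    calc (ML + MR).rank ≤ ML.rank + MR.rank := matrix_rank_add_le' ML MR
      _ ≤ Fintype.card I + Fintype.card I := by
          refine add_le_add ?_ ?_
          · rw [hML]
            exact (Matrix.rank_mul_le_left U WL).trans (Matrix.rank_le_card_width U)
          · rw [hMR]
            exact (Matrix.rank_mul_le_right WR V).trans (Matrix.rank_le_card_height V)
      _ = 2 * Fintype.card I := (two_mul _).symm
  -- count nonzero diagonal entries
  have hcount : (A.filter fun a => MvPolynomial.eval (-γ • a) P ≠ 0).card =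
      Fintype.card {a : A // w a ≠ 0} := by
    rw [← Fintype.card_coe]
    refine (Fintype.card_congr ?_).symm
    refine (Equiv.subtypeSubtypeEquivSubtypeExists _ _).trans (Equiv.subtypeEquivRight ?_)
    intro x
    simp [Finset.mem_filter, w, exists_prop]
  have hrankM' : M.rank ≤ 2 * (Finset.univ.filter (fun m : Fin n → Fin q =>
      2 * ∑ i, (m i : ℕ) ≤ d)).card := by
    rw [← hcardI]; exact hrankM
  rw [hcount, ← Matrix.rank_diagonal w, ← hMdiag]
  exact hrankM'
end

section
/- Let V be a subspace of functions F_q^n → F_q, viewed as functions, and let P ∈ V have support of maximal cardinality among elements of V. Then |supp(P)| ≥ dim V. -/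
/-- If `V` is a subspace of functions `F_q^n → F_q` and `P ∈ V` has support of maximal
cardinality among elements of `V`, then `|supp P| ≥ dim V`. -/
theorem stmt_7 (F : Type*) [Field F] [Fintype F] [DecidableEq F] (n : ℕ)
    (V : Submodule F ((Fin n → F) → F)) (P : (Fin n → F) → F) (hP : P ∈ V)
    (hmax : ∀ Q ∈ V, (Finset.univ.filter fun a => Q a ≠ 0).card ≤
      (Finset.univ.filter fun a => P a ≠ 0).card) :
    Module.finrank F V ≤ (Finset.univ.filter fun a => P a ≠ 0).card := by
  classical
  set s : Finset (Fin n → F) := Finset.univ.filter (fun a => P a ≠ 0) with hs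
  let L : V →ₗ[F] (s → F) :=
    { toFun := fun v a => v.1 a
      map_add' := fun u v => rfl
      map_smul' := fun c v => rfl }
  have hinj : Function.Injective L := by
    rw [← LinearMap.ker_eq_bot, LinearMap.ker_eq_bot']
    intro Q hQ
    by_contra hQ0
    obtain ⟨b, hb⟩ : ∃ b, Q.1 b ≠ 0 := by
      by_contra h
      push_neg at h
      exact hQ0 (Subtype.ext (funext h))
    have hQs : ∀ a (ha : a ∈ s), Q.1 a = 0 := fun a ha => by
      have := congrFun hQ ⟨a, ha⟩
      exact this
    have hbP : P b = 0 := by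
      by_contra hPb
      exact hb (hQs b (by simp [hs, hPb]))
    have hbs : b ∉ s := by simp [hs, hbP]
    have hsub : insert b s ⊆ Finset.univ.filter fun a => (P + Q.1) a ≠ 0 := by
      intro a ha
      rcases Finset.mem_insert.mp ha with rfl | ha
      · simp [hbP, hb]
      · have hPa : P a ≠ 0 := by simpa [hs] using ha
        simp [hQs a ha, hPa]
    have h1 := hmax (P + Q.1) (V.add_mem hP Q.2)
    have h2 := Finset.card_le_card hsub
    rw [Finset.card_insert_of_notMem hbs] at h2
    omega
  calc Module.finrank F V ≤ Module.finrank F (s → F) :=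
        LinearMap.finrank_le_finrank_of_injective hinj
    _ = s.card := by simp [Module.finrank_fintype_fun_eq_card]
end

section
/- If A ⊆ (Z/3Z)^n contains no three-term arithmetic progression (i.e., no solutions to a + c = 2b with a, b, c not all equal), then |A| ≤ 3·m_{2n/3}, where m_{2n/3} is the number of monomials in n variables with each exponent in {0,1,2} and total degree at most 2n/3. -/
open Finset

lemma exists_large_support {ι K : Type*} [Fintype ι] [DecidableEq ι] [Field K] [DecidableEq K]
    (V : Submodule K (ι → K)) :
    ∃ h ∈ V, Module.finrank K V ≤ (Finset.univ.filter (fun i => h i ≠ 0)).card := by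
  classical
  set T := (Finset.univ : Finset (Finset ι)).filter
      (fun B => ∀ h ∈ V, (∀ i ∈ B, h i = 0) → h = 0) with hT
  have hTne : T.Nonempty := by
    refine ⟨Finset.univ, mem_filter.mpr ⟨mem_univ _, fun h _ hz => ?_⟩⟩
    funext i; exact hz i (mem_univ i)
  obtain ⟨B, hBT, hBmin⟩ := T.exists_min_image Finset.card hTne
  have hP : ∀ h ∈ V, (∀ i ∈ B, h i = 0) → h = 0 := (mem_filter.mp hBT).2
  -- restriction map
  let ρ : V →ₗ[K] (↥B → K) :=
    (LinearMap.funLeft K K (fun i : ↥B => (i : ι))).comp V.subtype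
  have hρ : ∀ (h : V) (i : ↥B), ρ h i = (h : ι → K) i := fun _ _ => rfl
  have hinj : Function.Injective ρ := by
    intro x y hxy
    have : ((x : ι → K) - y) ∈ V := sub_mem x.2 y.2
    have hz : (x : ι → K) - y = 0 := by
      refine hP _ this fun i hi => ?_
      have := congrFun hxy ⟨i, hi⟩
      simp only [hρ] at this
      simp [Pi.sub_apply, this]
    exact Subtype.ext (by rwa [sub_eq_zero] at hz)
  have hsurj : Function.Surjective ρ := by
    by_contra hns
    have hlt : LinearMap.range ρ < ⊤ := by
      rcases lt_or_eq_of_le (le_top : LinearMap.range ρ ≤ ⊤) with h | h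
      · exact h
      · exact absurd (LinearMap.range_eq_top.mp h) hns
    obtain ⟨φ, hφ0, hφ⟩ := Submodule.exists_dual_map_eq_bot_of_lt_top hlt inferInstance
    set c : ↥B → K := fun i => φ (fun j => if i = j then 1 else 0) with hc
    have hφx : ∀ x : ↥B → K, φ x = ∑ i, x i * c i := by
      intro x
      conv_lhs => rw [pi_eq_sum_univ x]
      rw [map_sum]
      exact Finset.sum_congr rfl fun i _ => by rw [map_smul, smul_eq_mul]
    have hex : ∃ i0 : ↥B, c i0 ≠ 0 := by
      by_contra hall
      push_neg at hall
      apply hφ0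
      ext x
      simp [hφx, hall]
    obtain ⟨i0, hi0⟩ := hex
    -- B.erase i0 also satisfies P
    have hP' : ∀ h ∈ V, (∀ i ∈ B.erase i0, h i = 0) → h = 0 := by
      intro h hhV hz
      refine hP h hhV fun i hi => ?_
      by_cases hii : i = (i0 : ι)
      · subst hii
        have hr : φ (ρ ⟨h, hhV⟩) = 0 := by
          have : ρ ⟨h, hhV⟩ ∈ LinearMap.range ρ := ⟨_, rfl⟩
          have := Submodule.mem_map_of_mem (f := φ) this
          rw [hφ] at this
          exact (Submodule.mem_bot (R := K)).mp this
        rw [hφx] at hr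
        have : ∀ j : ↥B, j ≠ i0 → ρ ⟨h, hhV⟩ j * c j = 0 := by
          intro j hj
          have : h (j : ι) = 0 := hz _ (mem_erase.mpr ⟨fun e => hj (Subtype.ext e), j.2⟩)
          simp [hρ, this]
        rw [Fintype.sum_eq_single i0 this] at hr
        rcases mul_eq_zero.mp hr with h1 | h1
        · simpa [hρ] using h1
        · exact absurd h1 hi0
      · exact hz i (mem_erase.mpr ⟨hii, hi⟩)
    have hBe : B.erase i0 ∈ T := by
      simp only [hT, mem_filter, mem_univ, true_and]
      exact hP'
    have := hBmin _ hBe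
    have hlt2 : (B.erase i0).card < B.card := Finset.card_erase_lt_of_mem i0.2
    omega
  obtain ⟨h, hh⟩ := hsurj (fun _ => 1)
  refine ⟨h, h.2, ?_⟩
  have h1 : Module.finrank K V ≤ B.card := by
    have := LinearMap.finrank_le_finrank_of_injective hinj
    rwa [Module.finrank_pi, Fintype.card_coe] at this
  refine h1.trans (Finset.card_le_card fun i hi => ?_)
  simp only [mem_filter, mem_univ, true_and]
  have := congrFun hh ⟨i, hi⟩
  rw [hρ] at this
  rw [this]
  exact one_ne_zero

lemma diag_rank_le {ι κ K : Type*} [Fintype ι] [DecidableEq ι] [Fintype κ] [Field K] [DecidableEq K]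
    (h : ι → K) (u v : κ → ι → K)
    (hd : ∀ a b : ι, (if a = b then h a else 0) = ∑ j, u j a * v j b) :
    (Finset.univ.filter (fun i => h i ≠ 0)).card ≤ Fintype.card κ := by
  classical
  by_contra hgt
  push_neg at hgt
  set B := (Finset.univ.filter (fun i => h i ≠ 0)) with hB
  let Ψ : (↥B → K) →ₗ[K] (κ → K) := (Matrix.of fun j (b : ↥B) => v j (b : ι)).mulVecLin
  have hninj : ¬ Function.Injective Ψ := by
    intro hinj
    have := LinearMap.finrank_le_finrank_of_injective hinj
    rw [Module.finrank_pi, Module.finrank_pi, Fintype.card_coe] at this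
    omega
  rw [← LinearMap.ker_eq_bot] at hninj
  obtain ⟨x, hxk, hx0⟩ := Submodule.exists_mem_ne_zero_of_ne_bot hninj
  obtain ⟨a, hxa⟩ : ∃ a : ↥B, x a ≠ 0 := by
    by_contra hall
    push_neg at hall
    exact hx0 (funext hall)
  have hΨ : ∀ j, ∑ b : ↥B, v j (b : ι) * x b = 0 := by
    intro j
    have := congrFun (LinearMap.mem_ker.mp hxk) j
    simpa [Ψ, Matrix.mulVecLin_apply, Matrix.mulVec, dotProduct] using this
  have key : h (a : ι) * x a = 0 := by
    have : ∀ b : ↥B, (if (a : ι) = (b : ι) then h (a : ι) else 0) * x b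
        = ∑ j, u j (a : ι) * (v j (b : ι) * x b) := by
      intro b
      rw [hd]
      rw [Finset.sum_mul]
      exact Finset.sum_congr rfl fun j _ => by ring
    calc h (a : ι) * x a
        = ∑ b : ↥B, (if (a : ι) = (b : ι) then h (a : ι) else 0) * x b := by
          rw [Fintype.sum_eq_single a (fun b hb => by
            rw [if_neg (fun e => hb (Subtype.ext e.symm)), zero_mul])]
          rw [if_pos rfl]
      _ = ∑ b : ↥B, ∑ j, u j (a : ι) * (v j (b : ι) * x b) :=
          Finset.sum_congr rfl fun b _ => this b
      _ = ∑ j, u j (a : ι) * ∑ b : ↥B, v j (b : ι) * x b := by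
          rw [Finset.sum_comm]
          exact Finset.sum_congr rfl fun j _ => (Finset.mul_sum _ _ _).symm
      _ = 0 := Finset.sum_eq_zero fun j _ => by rw [hΨ j, mul_zero]
  have ha : h (a : ι) ≠ 0 := (mem_filter.mp a.2).2
  exact hxa (by
    rcases mul_eq_zero.mp key with h1 | h1
    · exact absurd h1 ha
    · exact h1)

def co : Fin 3 × Fin 3 × Fin 3 → ZMod 3
  | (0,0,0) => 1
  | (2,0,0) => 2
  | (0,2,0) => 2
  | (0,0,2) => 2
  | (1,1,0) => 1
  | (1,0,1) => 1
  | (0,1,1) => 1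
  | _ => 0

lemma co_spec : ∀ x y z : ZMod 3,
    1 - (x + y + z)^2
      = ∑ t : Fin 3 × Fin 3 × Fin 3, co t * x ^ (t.1 : ℕ) * y ^ (t.2.1 : ℕ) * z ^ (t.2.2 : ℕ) := by
  decide

lemma co_deg : ∀ t : Fin 3 × Fin 3 × Fin 3, co t ≠ 0 →
    (t.1 : ℕ) + (t.2.1 : ℕ) + (t.2.2 : ℕ) ≤ 2 := by decide

lemma expand (n : ℕ) (a b c : Fin n → ZMod 3) :
    ∏ i, (1 - (a i + b i + c i)^2)
      = ∑ g : Fin n → Fin 3 × Fin 3 × Fin 3, (∏ i, co (g i)) *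
        ((∏ i, a i ^ ((g i).1 : ℕ)) * (∏ i, b i ^ ((g i).2.1 : ℕ))
          * (∏ i, c i ^ ((g i).2.2 : ℕ))) := by
  calc ∏ i, (1 - (a i + b i + c i)^2)
      = ∏ i, ∑ t : Fin 3 × Fin 3 × Fin 3,
          co t * a i ^ (t.1 : ℕ) * b i ^ (t.2.1 : ℕ) * c i ^ (t.2.2 : ℕ) :=
        Finset.prod_congr rfl fun i _ => co_spec _ _ _
    _ = ∑ g ∈ Fintype.piFinset (fun _ : Fin n => (Finset.univ : Finset (Fin 3 × Fin 3 × Fin 3))),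
          ∏ i, co (g i) * a i ^ ((g i).1 : ℕ) * b i ^ ((g i).2.1 : ℕ) * c i ^ ((g i).2.2 : ℕ) :=
        Finset.prod_univ_sum _ _
    _ = ∑ g : Fin n → Fin 3 × Fin 3 × Fin 3,
          ∏ i, co (g i) * a i ^ ((g i).1 : ℕ) * b i ^ ((g i).2.1 : ℕ) * c i ^ ((g i).2.2 : ℕ) := by
        rw [Fintype.piFinset_univ]
    _ = _ := Finset.sum_congr rfl fun g _ => by
        rw [show (fun i => co (g i) * a i ^ ((g i).1 : ℕ) * b i ^ ((g i).2.1 : ℕ)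
              * c i ^ ((g i).2.2 : ℕ))
            = fun i => (co (g i) * a i ^ ((g i).1 : ℕ) * b i ^ ((g i).2.1 : ℕ))
              * c i ^ ((g i).2.2 : ℕ) from rfl,
          Finset.prod_mul_distrib, Finset.prod_mul_distrib, Finset.prod_mul_distrib]
        ring

lemma T_eq (n : ℕ) (a b c : Fin n → ZMod 3) :
    ∏ i, (1 - (a i + b i + c i)^2) = if a + b + c = 0 then 1 else 0 := by
  by_cases h : a + b + c = 0
  · rw [if_pos h]
    refine Finset.prod_eq_one fun i _ => ?_
    have hi : a i + b i + c i = 0 := congrFun h i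
    rw [hi]; decide
  · rw [if_neg h]
    have : ∃ i, a i + b i + c i ≠ 0 := by
      by_contra hall
      push_neg at hall
      exact h (funext hall)
    obtain ⟨i, hi⟩ := this
    refine Finset.prod_eq_zero (Finset.mem_univ i) ?_
    revert hi
    generalize a i + b i + c i = w
    revert w; decide

/-- If `A ⊆ (ℤ/3ℤ)^n` contains no three-term arithmetic progression (no solutions of
`a + c = 2b` with `a, b, c` not all equal), then `|A| ≤ 3 * m_{2n/3}`, where `m_{2n/3}`
is the number of monomials in `n` variables with exponents in `{0,1,2}` and total degree
at most `2n/3`. -/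
theorem stmt_14 (n : ℕ) (hn : 0 < n) (A : Finset (Fin n → ZMod 3))
    (hA : ∀ a ∈ A, ∀ b ∈ A, ∀ c ∈ A, a + c = (2 : ZMod 3) • b → a = b ∧ b = c) :
    A.card ≤ 3 * (Finset.univ.filter (fun m : Fin n → Fin 3 =>
      3 * ∑ i, (m i : ℕ) ≤ 2 * n)).card := by
  classical
  set S := (Finset.univ.filter (fun m : Fin n → Fin 3 => 3 * ∑ i, (m i : ℕ) ≤ 2 * n)) with hSdef
  set mon : (Fin n → Fin 3) → (Fin n → ZMod 3) → ZMod 3 :=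
    fun α x => ∏ i, x i ^ (α i : ℕ) with hmon
  -- no-3AP rephrased
  have hA' : ∀ a ∈ A, ∀ b ∈ A, ∀ c ∈ A, a + b + c = 0 → a = b ∧ b = c := by
    intro a ha b hb c hc habc
    refine hA a ha b hb c hc ?_
    funext i
    have hi : a i + b i + c i = 0 := congrFun habc i
    have : ∀ x y z : ZMod 3, x + y + z = 0 → x + z = 2 * y := by decide
    simpa using this _ _ _ hi
  -- the kernel subspace
  let Φ : (↥A → ZMod 3) →ₗ[ZMod 3] (↥S → ZMod 3) :=
    (Matrix.of fun (γ : ↥S) (c : ↥A) => mon γ c).mulVecLin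
  obtain ⟨h, hker, hsupp⟩ := exists_large_support (LinearMap.ker Φ)
  -- rank-nullity bound
  have hrank : A.card ≤ S.card + Module.finrank (ZMod 3) (LinearMap.ker Φ) := by
    have h1 := LinearMap.finrank_range_add_finrank_ker Φ
    rw [Module.finrank_pi, Fintype.card_coe] at h1
    have h2 : Module.finrank (ZMod 3) (LinearMap.range Φ)
        ≤ Module.finrank (ZMod 3) (↥S → ZMod 3) := Submodule.finrank_le _
    rw [Module.finrank_pi, Fintype.card_coe] at h2
    omega
  -- W vanishes on S
  set W : (Fin n → Fin 3) → ZMod 3 := fun γ => ∑ c : ↥A, h c * mon γ c with hWdef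
  have hW : ∀ γ ∈ S, W γ = 0 := by
    intro γ hγ
    have := congrFun (LinearMap.mem_ker.mp hker) ⟨γ, hγ⟩
    simp only [Matrix.mulVecLin_apply, Matrix.mulVec, dotProduct, Pi.zero_apply] at this
    rw [hWdef]
    rw [← this]
    exact Finset.sum_congr rfl fun c _ => mul_comm _ _
  -- abbreviations for the three degree functions
  set αf : (Fin n → Fin 3 × Fin 3 × Fin 3) → (Fin n → Fin 3) := fun g i => (g i).1 with hαf
  set βf : (Fin n → Fin 3 × Fin 3 × Fin 3) → (Fin n → Fin 3) := fun g i => (g i).2.1 with hβf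
  set γf : (Fin n → Fin 3 × Fin 3 × Fin 3) → (Fin n → Fin 3) := fun g i => (g i).2.2 with hγf
  set C : (Fin n → Fin 3 × Fin 3 × Fin 3) → ZMod 3 := fun g => ∏ i, co (g i) with hC
  set G1 : Finset (Fin n → Fin 3 × Fin 3 × Fin 3) :=
    Finset.univ.filter (fun g => αf g ∈ S) with hG1
  set G2 : Finset (Fin n → Fin 3 × Fin 3 × Fin 3) :=
    Finset.univ.filter (fun g => αf g ∉ S ∧ βf g ∈ S) with hG2
  -- the slice functions
  set u : (↥S ⊕ ↥S) → ↥A → ZMod 3 := fun j a =>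
    match j with
    | Sum.inl α₀ => mon α₀ a
    | Sum.inr β₀ => ∑ g ∈ G2.filter (fun g => βf g = β₀), C g * mon (αf g) a * W (γf g)
    with hu
  set v : (↥S ⊕ ↥S) → ↥A → ZMod 3 := fun j b =>
    match j with
    | Sum.inl α₀ => ∑ g ∈ G1.filter (fun g => αf g = α₀), C g * mon (βf g) b * W (γf g)
    | Sum.inr β₀ => mon β₀ b
    with hv
  -- the diagonal identity
  have hdiag : ∀ a b : ↥A, (if a = b then h a else 0) = ∑ j, u j a * v j b := by
    intro a b
    -- step 1: diagonal equals weighted sum of T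
    have step1 : (if a = b then h a else 0)
        = ∑ c : ↥A, h c * ∏ i, (1 - ((a : Fin n → ZMod 3) i + (b : Fin n → ZMod 3) i
            + (c : Fin n → ZMod 3) i)^2) := by
      have hT : ∀ c : ↥A, (∏ i, (1 - ((a : Fin n → ZMod 3) i + (b : Fin n → ZMod 3) i
            + (c : Fin n → ZMod 3) i)^2))
          = if (a : Fin n → ZMod 3) + b + c = 0 then 1 else 0 := fun c => T_eq n a b c
      by_cases hab : a = b
      · subst hab
        rw [if_pos rfl]
        rw [Fintype.sum_eq_single a]
        · rw [hT a, if_pos, mul_one]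
          funext i
          have : ∀ x : ZMod 3, x + x + x = 0 := by decide
          exact this _
        · intro c hc
          rw [hT c, if_neg, mul_zero]
          intro hcon
          apply hc
          apply Subtype.ext
          funext i
          have hi := congrFun hcon i
          have : ∀ x y : ZMod 3, x + x + y = 0 → y = x := by decide
          exact this _ _ hi
      · rw [if_neg hab]
        symm
        refine Finset.sum_eq_zero fun c _ => ?_
        rw [hT c, if_neg, mul_zero]
        intro hcon
        exact hab (Subtype.ext ((hA' a a.2 b b.2 c c.2 hcon).1))
    -- step 2: expand
    have step2 : (if a = b then h a else 0)
        = ∑ g : Fin n → Fin 3 × Fin 3 × Fin 3,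
            C g * mon (αf g) a * (mon (βf g) b * W (γf g)) := by
      rw [step1]
      have : ∀ c : ↥A, h c * ∏ i, (1 - ((a : Fin n → ZMod 3) i + (b : Fin n → ZMod 3) i
            + (c : Fin n → ZMod 3) i)^2)
          = ∑ g : Fin n → Fin 3 × Fin 3 × Fin 3,
              C g * mon (αf g) a * (mon (βf g) b * (h c * mon (γf g) c)) := by
        intro c
        rw [expand n a b c, Finset.mul_sum]
        exact Finset.sum_congr rfl fun g _ => by rw [hmon, hC, hαf, hβf, hγf]; ring
      rw [Finset.sum_congr rfl fun c _ => this c, Finset.sum_comm]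
      refine Finset.sum_congr rfl fun g _ => ?_
      rw [hWdef]
      simp only [Finset.mul_sum]
    rw [step2]
    -- step 3: drop terms with γf g ∈ S or C g = 0
    have step3 : ∑ g : Fin n → Fin 3 × Fin 3 × Fin 3,
            C g * mon (αf g) a * (mon (βf g) b * W (γf g))
        = (∑ g ∈ G1, C g * mon (αf g) a * (mon (βf g) b * W (γf g)))
          + ∑ g ∈ G2, C g * mon (αf g) a * (mon (βf g) b * W (γf g)) := by
      rw [← Finset.sum_filter_add_sum_filter_not Finset.univ (fun g => αf g ∈ S)]
      rw [← hG1]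
      congr 1
      rw [← Finset.sum_filter_add_sum_filter_not
        (Finset.univ.filter (fun g => αf g ∉ S)) (fun g => βf g ∈ S)]
      have e1 : (Finset.univ.filter (fun g => αf g ∉ S)).filter (fun g => βf g ∈ S) = G2 := by
        rw [hG2, Finset.filter_filter]
      rw [e1]
      have e2 : ∀ g ∈ (Finset.univ.filter (fun g => αf g ∉ S)).filter (fun g => βf g ∉ S),
          C g * mon (αf g) a * (mon (βf g) b * W (γf g)) = 0 := by
        intro g hg
        simp only [Finset.mem_filter, Finset.mem_univ, true_and] at hg
        by_cases hCg : C g = 0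
        · rw [hCg]; ring
        · have hγS : γf g ∈ S := by
            have hall : ∀ i, co (g i) ≠ 0 := by
              rw [hC] at hCg
              intro i hi
              exact hCg (Finset.prod_eq_zero (Finset.mem_univ i) hi)
            have htot : ∑ i, (((g i).1 : ℕ) + ((g i).2.1 : ℕ) + ((g i).2.2 : ℕ)) ≤ 2 * n := by
              calc ∑ i, (((g i).1 : ℕ) + ((g i).2.1 : ℕ) + ((g i).2.2 : ℕ))
                  ≤ ∑ _i : Fin n, 2 := Finset.sum_le_sum fun i _ => co_deg _ (hall i)
                _ = 2 * n := by rw [Finset.sum_const, Finset.card_univ, Fintype.card_fin]; ring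
            have hsplit : ∑ i, (((g i).1 : ℕ) + ((g i).2.1 : ℕ) + ((g i).2.2 : ℕ))
                = (∑ i, ((g i).1 : ℕ)) + (∑ i, ((g i).2.1 : ℕ)) + (∑ i, ((g i).2.2 : ℕ)) := by
              rw [Finset.sum_add_distrib, Finset.sum_add_distrib]
            have h1 : ¬ (3 * ∑ i, ((g i).1 : ℕ) ≤ 2 * n) := by
              have := hg.1
              rw [hSdef] at this
              simp only [Finset.mem_filter, Finset.mem_univ, true_and, hαf] at this
              exact this
            have h2 : ¬ (3 * ∑ i, ((g i).2.1 : ℕ) ≤ 2 * n) := by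
              have := hg.2
              rw [hSdef] at this
              simp only [Finset.mem_filter, Finset.mem_univ, true_and, hβf] at this
              exact this
            rw [hSdef]
            simp only [Finset.mem_filter, Finset.mem_univ, true_and, hγf]
            omega
          rw [hW _ hγS]; ring
      rw [Finset.sum_eq_zero e2, add_zero]
    rw [step3]
    -- step 4: fiberwise regrouping
    have step4a : ∑ g ∈ G1, C g * mon (αf g) (a : Fin n → ZMod 3) * (mon (βf g) (b : Fin n → ZMod 3) * W (γf g))
        = ∑ α₀ : ↥S, u (Sum.inl α₀) a * v (Sum.inl α₀) b := by
      have mapsto : ∀ g ∈ G1, αf g ∈ S := fun g hg => by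
        rw [hG1] at hg; exact (Finset.mem_filter.mp hg).2
      calc ∑ g ∈ G1, C g * mon (αf g) (a : Fin n → ZMod 3) * (mon (βf g) (b : Fin n → ZMod 3) * W (γf g))
          = ∑ α₀ ∈ S, ∑ g ∈ G1.filter (fun g => αf g = α₀),
              C g * mon (αf g) (a : Fin n → ZMod 3) * (mon (βf g) (b : Fin n → ZMod 3) * W (γf g)) :=
            (Finset.sum_fiberwise_of_maps_to mapsto _).symm
        _ = ∑ α₀ ∈ S, mon α₀ (a : Fin n → ZMod 3) * ∑ g ∈ G1.filter (fun g => αf g = α₀),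
              C g * mon (βf g) (b : Fin n → ZMod 3) * W (γf g) := by
            refine Finset.sum_congr rfl fun α₀ _ => ?_
            rw [Finset.mul_sum]
            refine Finset.sum_congr rfl fun g hg => ?_
            rw [(Finset.mem_filter.mp hg).2]
            ring
        _ = ∑ α₀ : ↥S, u (Sum.inl α₀) a * v (Sum.inl α₀) b :=
            (Finset.sum_coe_sort S (fun α₀ => mon α₀ (a : Fin n → ZMod 3) *
              ∑ g ∈ G1.filter (fun g => αf g = α₀),
                C g * mon (βf g) (b : Fin n → ZMod 3) * W (γf g))).symm
    have step4b : ∑ g ∈ G2, C g * mon (αf g) (a : Fin n → ZMod 3) * (mon (βf g) (b : Fin n → ZMod 3) * W (γf g))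
        = ∑ β₀ : ↥S, u (Sum.inr β₀) a * v (Sum.inr β₀) b := by
      have mapsto : ∀ g ∈ G2, βf g ∈ S := fun g hg => by
        rw [hG2] at hg; exact (Finset.mem_filter.mp hg).2.2
      calc ∑ g ∈ G2, C g * mon (αf g) (a : Fin n → ZMod 3) * (mon (βf g) (b : Fin n → ZMod 3) * W (γf g))
          = ∑ β₀ ∈ S, ∑ g ∈ G2.filter (fun g => βf g = β₀),
              C g * mon (αf g) (a : Fin n → ZMod 3) * (mon (βf g) (b : Fin n → ZMod 3) * W (γf g)) :=
            (Finset.sum_fiberwise_of_maps_to mapsto _).symm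
        _ = ∑ β₀ ∈ S, (∑ g ∈ G2.filter (fun g => βf g = β₀),
              C g * mon (αf g) (a : Fin n → ZMod 3) * W (γf g)) * mon β₀ (b : Fin n → ZMod 3) := by
            refine Finset.sum_congr rfl fun β₀ _ => ?_
            rw [Finset.sum_mul]
            refine Finset.sum_congr rfl fun g hg => ?_
            rw [(Finset.mem_filter.mp hg).2]
            ring
        _ = ∑ β₀ : ↥S, u (Sum.inr β₀) a * v (Sum.inr β₀) b :=
            (Finset.sum_coe_sort S (fun β₀ => (∑ g ∈ G2.filter (fun g => βf g = β₀),
              C g * mon (αf g) (a : Fin n → ZMod 3) * W (γf g)) * mon β₀ (b : Fin n → ZMod 3))).symm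
    rw [step4a, step4b, Fintype.sum_sum_type]
  -- conclude
  have hle := diag_rank_le h u v hdiag
  rw [Fintype.card_sum, Fintype.card_coe] at hle
  omega
end

section
/- If A ⊆ (Z/3Z)^n contains no three-term arithmetic progression, then |A| = O(2.756^n). -/
open Finset
set_option maxHeartbeats 1000000
set_option synthInstance.maxHeartbeats 400000
namespace CapSetAux



lemma matrank_add_le {K : Type*} [Field K] {a b : Type*} [Fintype a] [Fintype b]
    (A B : Matrix a b K) : (A + B).rank ≤ A.rank + B.rank := by
  classical
  rw [Matrix.rank, Matrix.rank, Matrix.rank, Matrix.mulVecLin_add]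
  have hle : LinearMap.range (A.mulVecLin + B.mulVecLin) ≤
      LinearMap.range A.mulVecLin ⊔ LinearMap.range B.mulVecLin := by
    rintro x ⟨v, rfl⟩
    exact Submodule.add_mem_sup (LinearMap.mem_range_self _ v) (LinearMap.mem_range_self _ v)
  calc Module.finrank K ↥(LinearMap.range (A.mulVecLin + B.mulVecLin))
      ≤ Module.finrank K ↥(LinearMap.range A.mulVecLin ⊔ LinearMap.range B.mulVecLin) :=
        Submodule.finrank_mono hle
    _ ≤ _ := Submodule.finrank_add_le_finrank_add_finrank _ _

lemma finrank_le_of_support_card_le {ι : Type*} [Fintype ι]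
    {K : Type*} [Field K] [DecidableEq K] (S : Submodule K (ι → K)) (k : ℕ)
    (hS : ∀ h ∈ S, (univ.filter fun i => h i ≠ 0).card ≤ k) :
    Module.finrank K ↥S ≤ k := by
  classical
  set P : ℕ → Prop := fun c => ∃ h ∈ S, (univ.filter fun i => h i ≠ 0).card = c with hP
  have hP0 : P 0 := ⟨0, S.zero_mem, by simp⟩
  have hex : P (Nat.findGreatest P (Fintype.card ι)) :=
    Nat.findGreatest_spec (Nat.zero_le _) hP0
  obtain ⟨h₀, hh₀S, hh₀c⟩ := hex
  set c₀ := Nat.findGreatest P (Fintype.card ι) with hc₀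
  set T : Finset ι := univ.filter fun i => h₀ i ≠ 0 with hT
  have hTk : T.card ≤ k := by rw [hT]; exact hS h₀ hh₀S
  let ρ : ↥S →ₗ[K] (↥T → K) :=
    { toFun := fun h i => h.1 i.1
      map_add' := fun x y => rfl
      map_smul' := fun c x => rfl }
  have hρinj : Function.Injective ρ := by
    rw [injective_iff_map_eq_zero]
    intro h hρh
    by_contra hne
    have : ∃ x, h.1 x ≠ 0 := by
      by_contra hall
      push_neg at hall
      exact hne (Subtype.ext (funext fun x => by simpa using hall x))
    obtain ⟨x, hx⟩ := this
    have hxT : x ∉ T := by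
      intro hxT
      have := congrFun hρh ⟨x, hxT⟩
      exact hx this
    set g : ι → K := h₀ + h.1 with hg
    have hgS : g ∈ S := S.add_mem hh₀S h.2
    have hsub : insert x T ⊆ univ.filter fun i => g i ≠ 0 := by
      intro i hi
      rcases Finset.mem_insert.mp hi with rfl | hiT
      · simp only [Finset.mem_filter, Finset.mem_univ, true_and]
        have hx0 : h₀ i = 0 := by
          by_contra hcon
          exact hxT (by simp [hT, hcon])
        simp [hg, hx0, hx]
      · simp only [Finset.mem_filter, Finset.mem_univ, true_and]
        have h1 : h₀ i ≠ 0 := (Finset.mem_filter.mp hiT).2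
        have h2 : h.1 i = 0 := congrFun hρh ⟨i, hiT⟩
        simp [hg, h2, h1]
    have hcard : c₀ + 1 ≤ (univ.filter fun i => g i ≠ 0).card := by
      calc c₀ + 1 = T.card + 1 := by rw [hh₀c]
        _ = (insert x T).card := (Finset.card_insert_of_notMem hxT).symm
        _ ≤ _ := Finset.card_le_card hsub
    have hle : (univ.filter fun i => g i ≠ 0).card ≤ c₀ :=
      Nat.le_findGreatest (Finset.card_le_card (Finset.filter_subset _ _) |>.trans (by simp))
        ⟨g, hgS, rfl⟩
    omega
  calc Module.finrank K ↥S ≤ Module.finrank K (↥T → K) :=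
        LinearMap.finrank_le_finrank_of_injective hρinj
    _ = T.card := by rw [Module.finrank_pi, Fintype.card_coe]
    _ ≤ k := hTk





abbrev F3 := ZMod 3
def cube (n : ℕ) : Finset (Fin n → ℕ) := Fintype.piFinset fun _ => Finset.range 3
def deg {n : ℕ} (p : Fin n → ℕ) : ℕ := ∑ i, p i
def Ed (n d : ℕ) : Finset (Fin n → ℕ) := (cube n).filter fun p => deg p ≤ d
def m (n d : ℕ) : ℕ := (Ed n d).card
def monN {n : ℕ} (p : Fin n → ℕ) : (Fin n → F3) → F3 := fun x => ∏ i, x i ^ p i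
lemma mem_cube {n : ℕ} {p : Fin n → ℕ} : p ∈ cube n ↔ ∀ i, p i ≤ 2 := by
  simp [cube, Fintype.mem_piFinset, Nat.lt_succ_iff]

lemma li (n d : ℕ) :
    LinearIndependent F3 (fun e : ↥(Ed n d) => monN (e : Fin n → ℕ)) := by
  classical
  rw [Fintype.linearIndependent_iff]
  intro g hg e₀
  set toF : (Fin n → ℕ) → (Fin n →₀ ℕ) := fun p => Finsupp.equivFunOnFinite.symm p with htoF
  have toF_apply : ∀ p i, toF p i = p i := fun p i => rfl
  have toF_inj : Function.Injective toF := Finsupp.equivFunOnFinite.symm.injective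
  set Q : MvPolynomial (Fin n) F3 :=
    ∑ e : ↥(Ed n d), MvPolynomial.monomial (toF e.1) (g e) with hQ
  have hcoeff : ∀ s, MvPolynomial.coeff s Q = ∑ e : ↥(Ed n d), if toF e.1 = s then g e else 0 := by
    intro s
    rw [hQ, MvPolynomial.coeff_sum]
    exact Finset.sum_congr rfl fun e _ => MvPolynomial.coeff_monomial _ _ _
  have heval : ∀ v : Fin n → F3, MvPolynomial.eval v Q = 0 := by
    intro v
    have h1 : MvPolynomial.eval v Q = ∑ e : ↥(Ed n d), g e * monN e.1 v := by
      rw [hQ, map_sum]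
      refine Finset.sum_congr rfl fun e _ => ?_
      rw [MvPolynomial.eval_monomial, Finsupp.prod_pow]
      rfl
    rw [h1]
    have := congrFun hg v
    simpa [Finset.sum_apply] using this
  have hQ0 : Q = 0 := by
    apply MvPolynomial.eq_zero_of_eval_eq_zero _ _ _ heval
    have hcard : Fintype.card F3 - 1 = 2 := by
      simp [ZMod.card]
    rw [hcard, MvPolynomial.mem_restrictDegree]
    intro s hs i
    have hc : MvPolynomial.coeff s Q ≠ 0 := MvPolynomial.mem_support_iff.mp hs
    rw [hcoeff] at hc
    obtain ⟨e, _, he⟩ := Finset.exists_ne_zero_of_sum_ne_zero hc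
    have : toF e.1 = s := by
      by_contra h
      simp [h] at he
    rw [← this, toF_apply]
    have : e.1 ∈ cube n := (Finset.mem_filter.mp e.2).1
    exact mem_cube.mp this i
  have := hcoeff (toF e₀.1)
  rw [hQ0] at this
  simp only [MvPolynomial.coeff_zero] at this
  have hsum : (∑ e : ↥(Ed n d), if toF e.1 = toF e₀.1 then g e else 0) = g e₀ := by
    rw [Finset.sum_eq_single e₀]
    · simp
    · intro e _ hne
      have : toF e.1 ≠ toF e₀.1 := by
        intro h
        exact hne (Subtype.ext (toF_inj h))
      simp [this]
    · intro h
      exact absurd (Finset.mem_univ e₀) h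
  rw [hsum] at this
  exact this.symm


lemma monN_add {n : ℕ} (e : Fin n → ℕ) (x y : Fin n → F3) :
    monN e (x + y) = ∑ p ∈ Fintype.piFinset (fun i => Finset.range (e i + 1)),
      (∏ i, (Nat.choose (e i) (p i) : F3)) * monN p x * monN (fun i => e i - p i) y := by
  unfold monN
  have h1 : ∀ i : Fin n, ((x + y) i) ^ e i =
      ∑ j ∈ Finset.range (e i + 1), x i ^ j * y i ^ (e i - j) * (Nat.choose (e i) j : F3) := by
    intro i
    simp only [Pi.add_apply]
    exact add_pow (x i) (y i) (e i)
  rw [Finset.prod_congr rfl (fun i _ => h1 i), Finset.prod_univ_sum]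
  refine Finset.sum_congr rfl fun p _ => ?_
  rw [Finset.prod_mul_distrib, Finset.prod_mul_distrib]
  ring





lemma clp (n d : ℕ) (A : Finset (Fin n → F3)) (f : (Fin n → F3) → F3)
    (hf : f ∈ Submodule.span F3 (Set.range fun e : ↥(Ed n d) => monN (e : Fin n → ℕ)))
    (hvan : ∀ a ∈ A, ∀ b ∈ A, a ≠ b → f (a + b) = 0) :
    (univ.filter fun a : ↥A => f (a.1 + a.1) ≠ 0).card ≤ 2 * m n (d / 2) := by
  classical
  obtain ⟨c, hc⟩ := (Submodule.mem_span_range_iff_exists_fun F3).mp hf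
  set k1 := d / 2 with hk1
  set piF : ↥(Ed n d) → Finset (Fin n → ℕ) :=
    fun e => Fintype.piFinset fun i => Finset.range ((e : Fin n → ℕ) i + 1) with hpiF
  set w : ↥(Ed n d) → (Fin n → ℕ) → F3 :=
    fun e p => c e * ∏ i, (Nat.choose ((e : Fin n → ℕ) i) (p i) : F3) with hw
  set sub : ↥(Ed n d) → (Fin n → ℕ) → (Fin n → ℕ) :=
    fun e p i => (e : Fin n → ℕ) i - p i with hsub
  have hple : ∀ (e : ↥(Ed n d)) (p : Fin n → ℕ), p ∈ piF e → ∀ i, p i ≤ (e : Fin n → ℕ) i := by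
    intro e p hp i
    have := (Fintype.mem_piFinset.mp hp) i
    simpa [Nat.lt_succ_iff] using this
  have hecube : ∀ (e : ↥(Ed n d)) (i : Fin n), (e : Fin n → ℕ) i ≤ 2 := by
    intro e i
    exact mem_cube.mp (Finset.mem_filter.mp e.2).1 i
  have hedeg : ∀ (e : ↥(Ed n d)), deg (e : Fin n → ℕ) ≤ d := fun e =>
    (Finset.mem_filter.mp e.2).2
  have hmemL : ∀ (e : ↥(Ed n d)) (p : Fin n → ℕ), p ∈ piF e → deg p ≤ k1 → p ∈ Ed n k1 := by
    intro e p hp hdeg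
    refine Finset.mem_filter.mpr ⟨mem_cube.mpr fun i => ?_, hdeg⟩
    exact le_trans (hple e p hp i) (hecube e i)
  have hmemR : ∀ (e : ↥(Ed n d)) (p : Fin n → ℕ), p ∈ piF e → ¬ deg p ≤ k1 →
      sub e p ∈ Ed n k1 := by
    intro e p hp hdeg
    refine Finset.mem_filter.mpr ⟨mem_cube.mpr fun i => ?_, ?_⟩
    · exact le_trans (Nat.sub_le _ _) (hecube e i)
    · have hsum : deg (sub e p) + deg p = deg (e : Fin n → ℕ) := by
        simp only [hsub, deg, ← Finset.sum_add_distrib]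
        exact Finset.sum_congr rfl fun i _ => Nat.sub_add_cancel (hple e p hp i)
      have h1 : deg (e : Fin n → ℕ) ≤ d := hedeg e
      have h2 : k1 + 1 ≤ deg p := by omega
      omega
  have hfval : ∀ x y : Fin n → F3, f (x + y) =
      ∑ e : ↥(Ed n d), ∑ p ∈ piF e, w e p * monN p x * monN (sub e p) y := by
    intro x y
    have h0 := congrFun hc (x + y)
    rw [Finset.sum_apply] at h0
    rw [← h0]
    refine Finset.sum_congr rfl fun e _ => ?_
    rw [Pi.smul_apply, smul_eq_mul, monN_add, Finset.mul_sum]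
    refine Finset.sum_congr rfl fun p _ => ?_
    simp only [hw]
    ring
  have collapse : ∀ (q : Fin n → ℕ), q ∈ Ed n k1 → ∀ G : (Fin n → ℕ) → F3,
      (∑ g : ↥(Ed n k1), if q = (g : Fin n → ℕ) then G (g : Fin n → ℕ) else 0) = G q := by
    intro q hq G
    rw [← Finset.sum_subtype (Ed n k1) (fun _ => Iff.rfl)
      (fun x => if q = x then G x else 0), Finset.sum_ite_eq, if_pos hq]
  set dvec : ↥A → F3 := fun a => f (a.1 + a.1) with hdvec
  set M : Matrix ↥A ↥A F3 := fun a b => f (a.1 + b.1) with hM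
  have hMdiag : M = Matrix.diagonal dvec := by
    ext a b
    by_cases hab : a = b
    · subst hab
      simp [hM, Matrix.diagonal_apply_eq, hdvec]
    · rw [Matrix.diagonal_apply_ne _ hab]
      exact hvan a.1 a.2 b.1 b.2 fun h => hab (Subtype.ext h)
  set L : Matrix ↥A ↥(Ed n k1) F3 := fun a g => monN (g : Fin n → ℕ) a.1 with hL
  set L' : Matrix ↥(Ed n k1) ↥A F3 := fun g b => monN (g : Fin n → ℕ) b.1 with hL'
  set R1 : Matrix ↥(Ed n k1) ↥A F3 := fun g b => ∑ e : ↥(Ed n d),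
      ∑ p ∈ (piF e).filter (fun p => deg p ≤ k1),
        if p = (g : Fin n → ℕ) then w e p * monN (sub e p) b.1 else 0 with hR1
  set R2 : Matrix ↥A ↥(Ed n k1) F3 := fun a g => ∑ e : ↥(Ed n d),
      ∑ p ∈ (piF e).filter (fun p => ¬ deg p ≤ k1),
        if sub e p = (g : Fin n → ℕ) then w e p * monN p a.1 else 0 with hR2
  have part1 : ∀ a b : ↥A, (∑ g : ↥(Ed n k1), L a g * R1 g b) =
      ∑ e : ↥(Ed n d), ∑ p ∈ (piF e).filter (fun p => deg p ≤ k1),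
        w e p * monN p a.1 * monN (sub e p) b.1 := by
    intro a b
    simp only [hL, hR1, Finset.mul_sum]
    rw [Finset.sum_comm]
    refine Finset.sum_congr rfl fun e _ => ?_
    rw [Finset.sum_comm]
    refine Finset.sum_congr rfl fun p hp => ?_
    obtain ⟨hp1, hp2⟩ := Finset.mem_filter.mp hp
    have hq : p ∈ Ed n k1 := hmemL e p hp1 hp2
    calc (∑ g : ↥(Ed n k1), monN (g : Fin n → ℕ) a.1 *
            (if p = (g : Fin n → ℕ) then w e p * monN (sub e p) b.1 else 0))
        = ∑ g : ↥(Ed n k1), (if p = (g : Fin n → ℕ) then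
            monN (g : Fin n → ℕ) a.1 * (w e p * monN (sub e p) b.1) else 0) := by
          refine Finset.sum_congr rfl fun g _ => ?_
          split <;> simp
      _ = monN p a.1 * (w e p * monN (sub e p) b.1) :=
          collapse p hq (fun v => monN v a.1 * (w e p * monN (sub e p) b.1))
      _ = w e p * monN p a.1 * monN (sub e p) b.1 := by ring
  have part2 : ∀ a b : ↥A, (∑ g : ↥(Ed n k1), R2 a g * L' g b) =
      ∑ e : ↥(Ed n d), ∑ p ∈ (piF e).filter (fun p => ¬ deg p ≤ k1),
        w e p * monN p a.1 * monN (sub e p) b.1 := by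
    intro a b
    simp only [hL', hR2, Finset.sum_mul]
    rw [Finset.sum_comm]
    refine Finset.sum_congr rfl fun e _ => ?_
    rw [Finset.sum_comm]
    refine Finset.sum_congr rfl fun p hp => ?_
    obtain ⟨hp1, hp2⟩ := Finset.mem_filter.mp hp
    have hq : sub e p ∈ Ed n k1 := hmemR e p hp1 hp2
    calc (∑ g : ↥(Ed n k1),
            (if sub e p = (g : Fin n → ℕ) then w e p * monN p a.1 else 0) *
              monN (g : Fin n → ℕ) b.1)
        = ∑ g : ↥(Ed n k1), (if sub e p = (g : Fin n → ℕ) then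
            (w e p * monN p a.1) * monN (g : Fin n → ℕ) b.1 else 0) := by
          refine Finset.sum_congr rfl fun g _ => ?_
          split <;> simp
      _ = (w e p * monN p a.1) * monN (sub e p) b.1 :=
          collapse (sub e p) hq (fun v => (w e p * monN p a.1) * monN v b.1)
      _ = w e p * monN p a.1 * monN (sub e p) b.1 := by ring
  have hsplit : M = L * R1 + R2 * L' := by
    ext a b
    rw [Matrix.add_apply, Matrix.mul_apply, Matrix.mul_apply, part1 a b, part2 a b]
    show f (a.1 + b.1) = _
    rw [hfval a.1 b.1]
    rw [← Finset.sum_add_distrib]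
    refine Finset.sum_congr rfl fun e _ => ?_
    exact (Finset.sum_filter_add_sum_filter_not (piF e) (fun p => deg p ≤ k1) _).symm
  have hrank : M.rank ≤ 2 * m n k1 := by
    rw [hsplit]
    calc (L * R1 + R2 * L').rank ≤ (L * R1).rank + (R2 * L').rank := matrank_add_le _ _
      _ ≤ Fintype.card ↥(Ed n k1) + Fintype.card ↥(Ed n k1) :=
          add_le_add (le_trans (Matrix.rank_mul_le_left L R1) (Matrix.rank_le_card_width L))
            (le_trans (Matrix.rank_mul_le_right R2 L') (Matrix.rank_le_card_height L'))
      _ = 2 * m n k1 := by rw [Fintype.card_coe]; unfold m; ring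
  have hrank2 : M.rank = (univ.filter fun a : ↥A => f (a.1 + a.1) ≠ 0).card := by
    rw [hMdiag, Matrix.rank_diagonal, Fintype.card_subtype]
  rw [← hrank2]
  exact hrank


lemma main_count (n d : ℕ) (A : Finset (Fin n → F3))
    (hA : ∀ a ∈ A, ∀ b ∈ A, ∀ c ∈ A, a + c = (2 : F3) • b → a = b ∧ b = c) :
    A.card + m n d ≤ 3 ^ n + 2 * m n (d / 2) := by
  classical
  set dbl : (Fin n → F3) → (Fin n → F3) := fun a => (2 : F3) • a with hdbl
  have dbl_inj : Function.Injective dbl := by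
    intro a b h
    funext i
    have h0 := congrFun h i
    simp only [hdbl, Pi.smul_apply, smul_eq_mul] at h0
    have h2 : (2 : F3) ≠ 0 := by decide
    exact mul_left_cancel₀ h2 h0
  have dbl_eq : ∀ a : Fin n → F3, dbl a = a + a := by
    intro a
    funext i
    simp [hdbl, Pi.smul_apply, smul_eq_mul, two_mul]
  set D : Finset (Fin n → F3) := A.image dbl with hD
  have hDcard : D.card = A.card := Finset.card_image_of_injective _ dbl_inj
  have hcardU : Fintype.card (Fin n → F3) = 3 ^ n := by
    simp [ZMod.card]
  have hAcard : A.card ≤ 3 ^ n := hcardU ▸ Finset.card_le_univ A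
  have hnotin : ∀ a ∈ A, ∀ b ∈ A, a ≠ b → a + b ∉ D := by
    intro a ha b hb hab hmem
    obtain ⟨b', hb', heq⟩ := Finset.mem_image.mp hmem
    exact hab ((hA a ha b' hb' b hb heq.symm).1.trans (hA a ha b' hb' b hb heq.symm).2)
  set W : Submodule F3 ((Fin n → F3) → F3) :=
    Submodule.span F3 (Set.range fun e : ↥(Ed n d) => monN (e : Fin n → ℕ)) with hWdef
  have hWrank : Module.finrank F3 ↥W = m n d := by
    rw [hWdef, finrank_span_eq_card (li n d), Fintype.card_coe]
    rfl
  set Dc : Finset (Fin n → F3) := Dᶜ with hDc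
  let φ : ↥W →ₗ[F3] (↥Dc → F3) :=
    { toFun := fun P x => P.1 x.1
      map_add' := fun x y => rfl
      map_smul' := fun c x => rfl }
  have hker : Module.finrank F3 ↥(LinearMap.ker φ) ≤ 2 * m n (d / 2) := by
    let ψ : ↥(LinearMap.ker φ) →ₗ[F3] (↥A → F3) :=
      { toFun := fun P a => P.1.1 (a.1 + a.1)
        map_add' := fun x y => rfl
        map_smul' := fun c x => rfl }
    have hψinj : Function.Injective ψ := by
      rw [injective_iff_map_eq_zero]
      intro P hP
      have hfun : (P.1 : (Fin n → F3) → F3) = 0 := by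
        funext x
        by_cases hx : x ∈ D
        · obtain ⟨a, ha, rfl⟩ := Finset.mem_image.mp hx
          rw [dbl_eq]
          exact congrFun hP ⟨a, ha⟩
        · have hxDc : x ∈ Dc := by simp [hDc, hx]
          exact congrFun (LinearMap.mem_ker.mp P.2) ⟨x, hxDc⟩
      exact Subtype.ext (Subtype.ext hfun)
    calc Module.finrank F3 ↥(LinearMap.ker φ)
        = Module.finrank F3 ↥(LinearMap.range ψ) := (LinearMap.finrank_range_of_inj hψinj).symm
      _ ≤ 2 * m n (d / 2) := by
          apply finrank_le_of_support_card_le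
          rintro h ⟨P, rfl⟩
          have hvan : ∀ a ∈ A, ∀ b ∈ A, a ≠ b → (P.1 : (Fin n → F3) → F3) (a + b) = 0 := by
            intro a ha b hb hab
            have hnot : a + b ∉ D := hnotin a ha b hb hab
            have hxDc : a + b ∈ Dc := by simp [hDc, hnot]
            exact congrFun (LinearMap.mem_ker.mp P.2) ⟨a + b, hxDc⟩
          have hclp := clp n d A (P.1 : (Fin n → F3) → F3) P.1.2 hvan
          convert hclp using 2
          rfl
  have h1 := LinearMap.finrank_range_add_finrank_ker φ
  have h2 : Module.finrank F3 ↥(LinearMap.range φ) ≤ Dc.card := by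
    calc Module.finrank F3 ↥(LinearMap.range φ)
        ≤ Module.finrank F3 (↥Dc → F3) := Submodule.finrank_le _
      _ = Dc.card := by rw [Module.finrank_pi, Fintype.card_coe]
  have h3 : Dc.card = 3 ^ n - A.card := by
    rw [hDc, Finset.card_compl, hDcard, hcardU]
  rw [hWrank] at h1
  omega

lemma cube_sum_pow (n : ℕ) (y : ℝ) :
    ∑ e ∈ cube n, y ^ (3 * deg e) = (1 + y ^ 3 + y ^ 6) ^ n := by
  have h1 : ∀ e : Fin n → ℕ, y ^ (3 * deg e) = ∏ i, (y ^ 3) ^ e i := by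
    intro e
    rw [pow_mul, deg, ← Finset.prod_pow_eq_pow_sum]
  rw [Finset.sum_congr rfl fun e _ => h1 e]
  unfold cube
  rw [← Finset.prod_univ_sum]
  have h2 : ∀ i : Fin n, ∑ j ∈ Finset.range 3, (y ^ 3) ^ j = 1 + y ^ 3 + y ^ 6 := by
    intro i
    rw [Finset.sum_range_succ, Finset.sum_range_succ, Finset.sum_range_one]
    ring
  rw [Finset.prod_congr rfl fun i _ => h2 i, Finset.prod_const, Finset.card_univ,
    Fintype.card_fin]

lemma m_le (n k : ℕ) (hk : 3 * k ≤ 2 * n) {y : ℝ} (hy0 : 0 < y) (hy1 : y ≤ 1) :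
    (m n k : ℝ) ≤ ((1 + y ^ 3 + y ^ 6) / y ^ 2) ^ n := by
  have key : (m n k : ℝ) * y ^ (2 * n) ≤ (1 + y ^ 3 + y ^ 6) ^ n := by
    calc (m n k : ℝ) * y ^ (2 * n) = ∑ _e ∈ Ed n k, y ^ (2 * n) := by
          rw [Finset.sum_const, nsmul_eq_mul]; rfl
      _ ≤ ∑ e ∈ Ed n k, y ^ (3 * deg e) := by
          refine Finset.sum_le_sum fun e he => ?_
          refine pow_le_pow_of_le_one hy0.le hy1 ?_
          have : deg e ≤ k := (Finset.mem_filter.mp he).2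
          omega
      _ ≤ ∑ e ∈ cube n, y ^ (3 * deg e) := by
          refine Finset.sum_le_sum_of_subset_of_nonneg (Finset.filter_subset _ _)
            fun e _ _ => pow_nonneg hy0.le _
      _ = (1 + y ^ 3 + y ^ 6) ^ n := cube_sum_pow n y
  have hy2 : (0 : ℝ) < y ^ (2 * n) := pow_pos hy0 _
  rw [div_pow, le_div_iff₀ (pow_pos (pow_pos hy0 2) n), ← pow_mul]
  exact key

lemma nat_bound (n : ℕ) (A : Finset (Fin n → F3))
    (hA : ∀ a ∈ A, ∀ b ∈ A, ∀ c ∈ A, a + c = (2 : F3) • b → a = b ∧ b = c) :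
    A.card ≤ 2 * m n ((4 * n / 3) / 2) + m n (2 * n - 4 * n / 3 - 1) := by
  classical
  set d := 4 * n / 3 with hd
  set k2 := 2 * n - d - 1 with hk2
  have h1 := main_count n d A hA
  have hcube : (cube n).card = 3 ^ n := by
    rw [cube, Fintype.card_piFinset]
    simp
  have hsplit : ((cube n).filter fun p => deg p ≤ d).card +
      ((cube n).filter fun p => ¬ deg p ≤ d).card = (cube n).card :=
    Finset.card_filter_add_card_filter_not _
  have hcompl : ((cube n).filter fun p => ¬ deg p ≤ d).card ≤ m n k2 := by
    refine Finset.card_le_card_of_injOn (fun e i => 2 - e i) ?_ ?_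
    · intro e he
      obtain ⟨he1, he2⟩ := Finset.mem_filter.mp he
      have hec : ∀ i, e i ≤ 2 := mem_cube.mp he1
      refine Finset.mem_filter.mpr ⟨mem_cube.mpr fun i => Nat.sub_le _ _, ?_⟩
      have hdd : deg (fun i => 2 - e i) + deg e = 2 * n := by
        rw [deg, deg, ← Finset.sum_add_distrib]
        have : ∀ i : Fin n, (2 - e i) + e i = 2 := fun i => by
          have := hec i; omega
        rw [Finset.sum_congr rfl fun i _ => this i, Finset.sum_const, Finset.card_univ,
          Fintype.card_fin, smul_eq_mul, mul_comm]
      set q := deg (fun i => 2 - e i) with hq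
      omega
    · intro e he e' he' heq
      funext i
      have h1 := mem_cube.mp (Finset.mem_filter.mp he).1 i
      have h2 := mem_cube.mp (Finset.mem_filter.mp he').1 i
      have h3 := congrFun heq i
      simp only at h3
      omega
  have hAcard : A.card ≤ 3 ^ n := by
    have hcardU : Fintype.card (Fin n → F3) = 3 ^ n := by simp [ZMod.card]
    exact hcardU ▸ Finset.card_le_univ A
  have hmd : m n d = ((cube n).filter fun p => deg p ≤ d).card := rfl
  omega

theorem capset_bound (n : ℕ) (A : Finset (Fin n → ZMod 3))
    (hA : ∀ a ∈ A, ∀ b ∈ A, ∀ c ∈ A, a + c = (2 : ZMod 3) • b → a = b ∧ b = c) :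
    (A.card : ℝ) ≤ 3 * 2.756 ^ n := by
  have hnat := nat_bound n A hA
  set y : ℝ := 0.84 with hy
  have hy0 : (0 : ℝ) < y := by norm_num [hy]
  have hy1 : y ≤ 1 := by norm_num [hy]
  set g : ℝ := (1 + y ^ 3 + y ^ 6) / y ^ 2 with hg
  have hg0 : 0 ≤ g := by positivity
  have hgle : g ≤ 2.756 := by rw [hg, hy]; norm_num
  have hk1 : 3 * ((4 * n / 3) / 2) ≤ 2 * n := by omega
  have hk2 : 3 * (2 * n - 4 * n / 3 - 1) ≤ 2 * n := by omega
  have hm1 := m_le n ((4 * n / 3) / 2) hk1 hy0 hy1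
  have hm2 := m_le n (2 * n - 4 * n / 3 - 1) hk2 hy0 hy1
  calc (A.card : ℝ)
      ≤ (2 * m n ((4 * n / 3) / 2) + m n (2 * n - 4 * n / 3 - 1) : ℕ) := by
        exact_mod_cast Nat.cast_le.mpr hnat
    _ = 2 * (m n ((4 * n / 3) / 2) : ℝ) + (m n (2 * n - 4 * n / 3 - 1) : ℝ) := by
        push_cast; ring
    _ ≤ 2 * g ^ n + g ^ n := by
        have := hm1; have := hm2
        gcongr
    _ = 3 * g ^ n := by ring
    _ ≤ 3 * 2.756 ^ n := by
        have : g ^ n ≤ 2.756 ^ n := pow_le_pow_left₀ hg0 hgle n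
        linarith

end CapSetAux

/-- Cap set bound: if `A ⊆ (ℤ/3ℤ)^n` has no three-term arithmetic progression, then
`|A| = O(2.756^n)`. -/
theorem stmt_15 :
    ∃ C : ℝ, ∀ n : ℕ, ∀ A : Finset (Fin n → ZMod 3),
      (∀ a ∈ A, ∀ b ∈ A, ∀ c ∈ A, a + c = (2 : ZMod 3) • b → a = b ∧ b = c) →
      (A.card : ℝ) ≤ C * 2.756 ^ n := by
  exact ⟨3, fun n A hA => CapSetAux.capset_bound n A hA⟩
end

section
/- With q = 3 and x = 2/3, the supremum over θ ∈ R of θx − log((1 + e^θ + e^{2θ})/3) is attained at θ with e^θ = (√33 − 1)/8, and 3·e^{−I(2/3)} < 2.756 where I(2/3) is this supremum. -/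
open Real Set

noncomputable def Fq3 (x : ℝ) : ℝ :=
  x * (2 / 3) - Real.log ((1 + Real.exp x + Real.exp (2 * x)) / 3)

lemma Fq3_hasDeriv (x : ℝ) :
    HasDerivAt Fq3
      (2 / 3 - (Real.exp x + 2 * Real.exp (2 * x)) / (1 + Real.exp x + Real.exp (2 * x))) x := by
  have hP : (0:ℝ) < (1 + Real.exp x + Real.exp (2 * x)) / 3 := by positivity
  have h2 : HasDerivAt (fun y : ℝ => Real.exp (2 * y)) (2 * Real.exp (2 * x)) x := by
    have h := ((hasDerivAt_id x).const_mul 2).exp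
    simp only [id_eq, mul_one] at h
    convert h using 1
    ring
  have h3 : HasDerivAt (fun y : ℝ => (1 + Real.exp y + Real.exp (2 * y)) / 3)
      ((Real.exp x + 2 * Real.exp (2 * x)) / 3) x := by
    have := (((hasDerivAt_const x (1:ℝ)).add (Real.hasDerivAt_exp x)).add h2).div_const 3
    simpa using this
  have h4 : HasDerivAt (fun y : ℝ => Real.log ((1 + Real.exp y + Real.exp (2 * y)) / 3))
      (((Real.exp x + 2 * Real.exp (2 * x)) / 3) / ((1 + Real.exp x + Real.exp (2 * x)) / 3)) x :=
    h3.log (ne_of_gt hP)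
  have h5 : HasDerivAt (fun y : ℝ => y * (2 / 3 : ℝ)) (2 / 3) x := by
    simpa using (hasDerivAt_id x).mul_const (2 / 3 : ℝ)
  have heq : ((Real.exp x + 2 * Real.exp (2 * x)) / 3) / ((1 + Real.exp x + Real.exp (2 * x)) / 3)
      = (Real.exp x + 2 * Real.exp (2 * x)) / (1 + Real.exp x + Real.exp (2 * x)) := by
    have hQ : (0:ℝ) < 1 + Real.exp x + Real.exp (2 * x) := by positivity
    field_simp
  have := h5.sub h4
  rw [heq] at this
  exact this

/-- With `q = 3` and `x = 2/3`, the supremum over `θ` of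
`θ·(2/3) − log((1 + e^θ + e^{2θ})/3)` is attained at `θ₀` with `e^{θ₀} = (√33 − 1)/8`,
and `3 e^{−I(2/3)} < 2.756`, where `I(2/3)` is this supremum. -/
theorem stmt_18 :
    ∃ θ₀ : ℝ, Real.exp θ₀ = (Real.sqrt 33 - 1) / 8 ∧
      (∀ θ : ℝ, θ * (2 / 3) - Real.log ((1 + Real.exp θ + Real.exp (2 * θ)) / 3) ≤
        θ₀ * (2 / 3) - Real.log ((1 + Real.exp θ₀ + Real.exp (2 * θ₀)) / 3)) ∧
      3 * Real.exp (-(θ₀ * (2 / 3) -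
        Real.log ((1 + Real.exp θ₀ + Real.exp (2 * θ₀)) / 3))) < 2.756 := by
  have h33 : (Real.sqrt 33) ^ 2 = 33 := Real.sq_sqrt (by norm_num)
  have hsnn : (0:ℝ) ≤ Real.sqrt 33 := Real.sqrt_nonneg 33
  have hsge : (5:ℝ) < Real.sqrt 33 := by nlinarith
  have hslt : Real.sqrt 33 < 5.7501 := by nlinarith
  set t₀ : ℝ := (Real.sqrt 33 - 1) / 8 with ht₀def
  have ht₀pos : 0 < t₀ := by rw [ht₀def]; linarith
  have hkey : 4 * t₀ ^ 2 + t₀ = 2 := by rw [ht₀def]; nlinarith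
  set θ₀ : ℝ := Real.log t₀ with hθ₀def
  have hexp : Real.exp θ₀ = t₀ := Real.exp_log ht₀pos
  refine ⟨θ₀, hexp, ?_, ?_⟩
  · -- maximality
    have hdiff : ∀ x : ℝ, DifferentiableAt ℝ Fq3 x := fun x => (Fq3_hasDeriv x).differentiableAt
    have hcont : Continuous Fq3 :=
      continuous_iff_continuousAt.2 fun x => (hdiff x).continuousAt
    have hderiv : ∀ x : ℝ, deriv Fq3 x =
        2 / 3 - (Real.exp x + 2 * Real.exp (2 * x)) / (1 + Real.exp x + Real.exp (2 * x)) :=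
      fun x => (Fq3_hasDeriv x).deriv
    have hsq : ∀ x : ℝ, Real.exp (2 * x) = Real.exp x * Real.exp x := by
      intro x; rw [two_mul, Real.exp_add]
    have hmono : MonotoneOn Fq3 (Iic θ₀) := by
      apply monotoneOn_of_deriv_nonneg (convex_Iic θ₀) hcont.continuousOn
        (fun x _ => (hdiff x).differentiableWithinAt)
      intro x hx
      rw [interior_Iic, mem_Iio] at hx
      rw [hderiv x]
      set t := Real.exp x with htdef
      have htpos : 0 < t := Real.exp_pos x
      have htle : t ≤ t₀ := by
        rw [htdef, ← hexp]; exact (Real.exp_le_exp.2 hx.le)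
      have hQ : (0:ℝ) < 1 + t + Real.exp (2 * x) := by positivity
      rw [sub_nonneg, div_le_iff₀ hQ, hsq x]
      nlinarith
    have hanti : AntitoneOn Fq3 (Ici θ₀) := by
      apply antitoneOn_of_deriv_nonpos (convex_Ici θ₀) hcont.continuousOn
        (fun x _ => (hdiff x).differentiableWithinAt)
      intro x hx
      rw [interior_Ici, mem_Ioi] at hx
      rw [hderiv x]
      set t := Real.exp x with htdef
      have htpos : 0 < t := Real.exp_pos x
      have htge : t₀ ≤ t := by
        rw [htdef, ← hexp]; exact (Real.exp_le_exp.2 hx.le)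
      have hQ : (0:ℝ) < 1 + t + Real.exp (2 * x) := by positivity
      rw [sub_nonpos, le_div_iff₀ hQ, hsq x]
      nlinarith
    intro θ
    have : Fq3 θ ≤ Fq3 θ₀ := by
      rcases le_total θ θ₀ with h | h
      · exact hmono h (self_mem_Iic) h
      · exact hanti (self_mem_Ici) h h
    simpa [Fq3] using this
  · -- numeric bound
    have hP₀ : (0:ℝ) < (1 + Real.exp θ₀ + Real.exp (2 * θ₀)) / 3 := by positivity
    have hsqθ : Real.exp (2 * θ₀) = t₀ * t₀ := by rw [two_mul, Real.exp_add, hexp]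
    set u : ℝ := Real.exp (-(θ₀ / 3)) with hudef
    have hupos : 0 < u := Real.exp_pos _
    have hu3 : u ^ 3 * t₀ = 1 := by
      rw [hudef, ← hexp, ← Real.exp_nat_mul, ← Real.exp_add]
      rw [show ((3:ℕ):ℝ) * -(θ₀ / 3) + θ₀ = 0 by push_cast; ring]
      exact Real.exp_zero
    have hval : 3 * Real.exp (-(θ₀ * (2 / 3) -
        Real.log ((1 + Real.exp θ₀ + Real.exp (2 * θ₀)) / 3)))
        = (1 + t₀ + t₀ * t₀) * u ^ 2 := by
      rw [neg_sub, Real.exp_sub, Real.exp_log hP₀, hsqθ, hexp, hudef, ← Real.exp_nat_mul,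
        show ((2:ℕ) : ℝ) * -(θ₀ / 3) = -(θ₀ * (2 / 3)) by push_cast; ring, Real.exp_neg]
      ring
    rw [hval]
    have hP3 : ((1 + t₀ + t₀ * t₀) * u ^ 2) ^ 3 < (2.756 : ℝ) ^ 3 := by
      have hu6 : (u ^ 2) ^ 3 * t₀ ^ 2 = 1 := by
        have : (u ^ 3 * t₀) ^ 2 = 1 := by rw [hu3]; norm_num
        nlinarith [this]
      have hpoly : (1 + t₀ + t₀ * t₀) ^ 3 < (2.756 : ℝ) ^ 3 * t₀ ^ 2 := by
        have e1 : 1 + t₀ + t₀ * t₀ = (6 + 3 * t₀) / 4 := by linear_combination hkey / 4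
        have e2 : t₀ ^ 2 = (2 - t₀) / 4 := by linear_combination hkey / 4
        have e3 : (6 + 3 * t₀) ^ 3 = 27 * (4860 + 708 * Real.sqrt 33) / 512 := by
          rw [ht₀def]
          linear_combination (27 * (Real.sqrt 33 + 45) / 512) * h33
        rw [e1, e2, div_pow, e3, ht₀def]
        nlinarith [hslt, hsge]
      calc ((1 + t₀ + t₀ * t₀) * u ^ 2) ^ 3
          = (1 + t₀ + t₀ * t₀) ^ 3 * ((u ^ 2) ^ 3 * t₀ ^ 2) / t₀ ^ 2 := by
            field_simp
        _ = (1 + t₀ + t₀ * t₀) ^ 3 / t₀ ^ 2 := by rw [hu6]; ring_nf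
        _ < (2.756 : ℝ) ^ 3 := by
            rw [div_lt_iff₀ (by positivity)]; exact hpoly
    exact lt_of_pow_lt_pow_left₀ 3 (by norm_num) hP3
end
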